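/- arXiv:1812.11564 — 3 statements merged into one kernel-verified Lean document; each statement's English description precedes it below -/
import Mathlib

section
/- There exists a constant c > 0 depending only on d such that: for every 0 < γ < 1, every φ ∈ (0, 1], and every (2, φ)-clusterable graph G on n vertices with maximum degree at most d, there is a subset V' ⊆ V with |V'| ≥ (1 − γ)n such that for every u ∈ V' and every integer t > c·(log n)/φ², the endpoint distribution of the length-t lazy random walk from u satisfies ‖p_u^t‖² ≤ 4/(γn). -/
open scoped RealInnerProductSpace

open scoped Classical in
/-- The lazy random walk matrix of a graph `G` with degree parameter `d`. -/
noncomputable def lazyWalk {n : ℕ} (G : SimpleGraph (Fin n)) (d : ℕ) :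
    Matrix (Fin n) (Fin n) ℝ :=
  Matrix.of fun u v =>
    if u = v then 1 - ((G.neighborSet u).ncard : ℝ) / (2 * d)
    else if G.Adj u v then 1 / (2 * d) else 0

/-- `G` has maximum degree at most `d`. -/
def MaxDegreeLE {n : ℕ} (G : SimpleGraph (Fin n)) (d : ℕ) : Prop :=
  ∀ v, (G.neighborSet v).ncard ≤ d

/-- `p_u^t`: the endpoint distribution of a length-`t` lazy random walk from `u`. -/
noncomputable def pvec {n : ℕ} (G : SimpleGraph (Fin n)) (d t : ℕ) (u : Fin n) :
    EuclideanSpace ℝ (Fin n) :=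
  WithLp.toLp 2 fun v => ((lazyWalk G d ^ t).mulVec fun w => if w = u then 1 else 0) v

/-- `q_u^t = p_u^t - (1/n) 𝟙`. -/
noncomputable def qvec {n : ℕ} (G : SimpleGraph (Fin n)) (d t : ℕ) (u : Fin n) :
    EuclideanSpace ℝ (Fin n) :=
  WithLp.toLp 2 fun v => pvec G d t u v - 1 / n

/-- `q_u^0 = 1_u - (1/n) 𝟙`. -/
noncomputable def qzero {n : ℕ} (u : Fin n) : EuclideanSpace ℝ (Fin n) :=
  WithLp.toLp 2 fun v => (if v = u then 1 else 0) - 1 / n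

/-- average of `q_u^0` over `u ∈ S`. -/
noncomputable def qavg {n : ℕ} (S : Finset (Fin n)) : EuclideanSpace ℝ (Fin n) :=
  (S.card : ℝ)⁻¹ • ∑ u ∈ S, qzero u

/-- `a` and `b` are `ε`-close to collinear. -/
def CloseCollinear {E : Type*} [NormedAddCommGroup E] [NormedSpace ℝ E]
    (ε : ℝ) (a b : E) : Prop :=
  ∃ (ea eb w : E) (s s' : ℝ),
    ‖ea‖ ≤ ε ∧ ‖eb‖ ≤ ε ∧ a + ea = s • w ∧ b + eb = s' • w

/-- `a` and `b` are `ε`-close to antipodal. -/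
def CloseAntipodal {E : Type*} [NormedAddCommGroup E] [NormedSpace ℝ E]
    (ε : ℝ) (a b : E) : Prop :=
  ∃ (ea eb w : E) (s s' : ℝ), 0 ≤ s ∧ 0 ≤ s' ∧
    ‖ea‖ ≤ ε ∧ ‖eb‖ ≤ ε ∧ a + ea = s • w ∧ b + eb = -(s' • w)

/-- `a` and `b` are `ε`-close to podal. -/
def ClosePodal {E : Type*} [NormedAddCommGroup E] [NormedSpace ℝ E]
    (ε : ℝ) (a b : E) : Prop :=
  ∃ (ea eb w : E) (s s' : ℝ), 0 ≤ s ∧ 0 ≤ s' ∧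
    ‖ea‖ ≤ ε ∧ ‖eb‖ ≤ ε ∧ a + ea = s • w ∧ b + eb = s' • w

/-- The Gram matrix `A_{u,v}` of two vectors. -/
noncomputable def gram2 {n : ℕ} (a b : EuclideanSpace ℝ (Fin n)) :
    Matrix (Fin 2) (Fin 2) ℝ :=
  !![‖a‖ ^ 2, ⟪a, b⟫; ⟪b, a⟫, ‖b‖ ^ 2]

/-- Number of edges of `G` between `S` and `C \ S` (for `S ⊆ C`). -/
noncomputable def cutEdgesIn {n : ℕ} (G : SimpleGraph (Fin n)) (C S : Finset (Fin n)) : ℕ :=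
  {p : Fin n × Fin n | p.1 ∈ S ∧ p.2 ∈ C ∧ p.2 ∉ S ∧ G.Adj p.1 p.2}.ncard

/-- Number of edges of `G` between `S` and its complement. -/
noncomputable def cutEdges {n : ℕ} (G : SimpleGraph (Fin n)) (S : Finset (Fin n)) : ℕ :=
  cutEdgesIn G Finset.univ S

/-- The cut conductance `φ_G(S) = e(S, V∖S) / (d|S|)`. -/
noncomputable def cutCond {n : ℕ} (G : SimpleGraph (Fin n)) (d : ℕ) (S : Finset (Fin n)) : ℝ :=
  (cutEdges G S : ℝ) / (d * S.card)

/-- The (inner) conductance of the induced subgraph `G[C]` is at least `φ`. -/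
def InnerConductanceGE {n : ℕ} (G : SimpleGraph (Fin n)) (d : ℕ) (C : Finset (Fin n))
    (φ : ℝ) : Prop :=
  ∀ S ⊆ C, S.Nonempty → 2 * S.card ≤ C.card →
    φ ≤ (cutEdgesIn G C S : ℝ) / (d * S.card)

/-- `G` is `(2, φ)`-clusterable. -/
def Clusterable2 {n : ℕ} (G : SimpleGraph (Fin n)) (d : ℕ) (φ : ℝ) : Prop :=
  InnerConductanceGE G d Finset.univ φ ∨
  ∃ C₁ C₂ : Finset (Fin n), C₁.Nonempty ∧ C₂.Nonempty ∧ Disjoint C₁ C₂ ∧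
    C₁ ∪ C₂ = Finset.univ ∧ InnerConductanceGE G d C₁ φ ∧ InnerConductanceGE G d C₂ φ

/-- `G` is `ε`-far from `(2, φ)`-clusterable. -/
def FarFromClusterable2 {n : ℕ} (G : SimpleGraph (Fin n)) (d : ℕ) (ε φ : ℝ) : Prop :=
  ∀ G' : SimpleGraph (Fin n), MaxDegreeLE G' d →
    ((symmDiff G.edgeSet G'.edgeSet).ncard : ℝ) ≤ ε * d * n →
    ¬ Clusterable2 G' d φ

/-- The span of the eigenvectors of `M` with eigenvalue greater than `c`. -/
noncomputable def heavySpace {n : ℕ} (M : Matrix (Fin n) (Fin n) ℝ) (c : ℝ) :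
    Submodule ℝ (EuclideanSpace ℝ (Fin n)) :=
  ⨆ μ : {μ : ℝ // c < μ}, Module.End.eigenspace (Matrix.toEuclideanLin M) (μ : ℝ)

/-- Orthogonal projection onto the span of the eigenvectors of `M` with eigenvalue
greater than `c`. -/
noncomputable def heavyProj {n : ℕ} (M : Matrix (Fin n) (Fin n) ℝ) (c : ℝ)
    (x : EuclideanSpace ℝ (Fin n)) : EuclideanSpace ℝ (Fin n) :=
  (Submodule.orthogonalProjection (heavySpace M c) x : EuclideanSpace ℝ (Fin n))


open scoped Classical

namespace Aux
variable {n : ℕ} (G : SimpleGraph (Fin n)) (d : ℕ)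

noncomputable def Dir (C : Finset (Fin n)) (x : Fin n → ℝ) : ℝ :=
  ∑ u ∈ C, ∑ v ∈ C, if G.Adj u v then (x u - x v)^2 else 0

lemma Dir_nonneg (C : Finset (Fin n)) (x : Fin n → ℝ) : 0 ≤ Dir G C x := by
  refine Finset.sum_nonneg fun u _ => Finset.sum_nonneg fun v _ => ?_
  by_cases h : G.Adj u v <;> simp [h, sq_nonneg]

lemma cutEdgesIn_eq_sum (C S : Finset (Fin n)) (hSC : S ⊆ C) :
    (cutEdgesIn G C S : ℝ)
      = ∑ u ∈ C, ∑ v ∈ C, (if G.Adj u v ∧ u ∈ S ∧ v ∉ S then (1:ℝ) else 0) := by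
  rw [← Finset.sum_product']
  rw [Finset.sum_boole]
  unfold cutEdgesIn
  norm_cast
  rw [Set.ncard_eq_toFinset_card']
  congr 1
  ext p
  simp only [Set.mem_toFinset, Set.mem_setOf_eq, Finset.mem_filter, Finset.mem_product]
  constructor
  · rintro ⟨h1, h2, h3, h4⟩
    exact ⟨⟨hSC h1, h2⟩, h4, h1, h3⟩
  · rintro ⟨⟨hu, hv⟩, ha, h1, h3⟩
    exact ⟨h1, hv, h3, ha⟩

lemma cross_swap (C S : Finset (Fin n)) :
    ∑ u ∈ C, ∑ v ∈ C, (if G.Adj u v ∧ u ∉ S ∧ v ∈ S then (1:ℝ) else 0)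
      = ∑ u ∈ C, ∑ v ∈ C, (if G.Adj u v ∧ u ∈ S ∧ v ∉ S then (1:ℝ) else 0) := by
  rw [Finset.sum_comm]
  refine Finset.sum_congr rfl fun u _ => Finset.sum_congr rfl fun v _ => ?_
  by_cases ha : G.Adj u v
  · have ha' : G.Adj v u := ha.symm
    by_cases h1 : u ∈ S <;> by_cases h2 : v ∈ S <;> simp [ha, ha', h1, h2]
  · have ha' : ¬ G.Adj v u := fun h => ha h.symm
    simp [ha, ha']

lemma sweep (hd : 1 ≤ d) {C : Finset (Fin n)} {φ : ℝ} (hφ : 0 ≤ φ)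
    (hcond : InnerConductanceGE G d C φ)
    (g : Fin n → ℝ) (hg : ∀ u, 0 ≤ g u)
    (hsupp : 2 * (C.filter fun u => g u ≠ 0).card ≤ C.card) :
    2 * (φ * d * ∑ u ∈ C, g u)
      ≤ ∑ u ∈ C, ∑ v ∈ C, (if G.Adj u v then |g u - g v| else 0) := by
  suffices H : ∀ k (g : Fin n → ℝ), (∀ u, 0 ≤ g u) →
      (C.filter fun u => g u ≠ 0).card = k →
      2 * (C.filter fun u => g u ≠ 0).card ≤ C.card →
      2 * (φ * d * ∑ u ∈ C, g u)
        ≤ ∑ u ∈ C, ∑ v ∈ C, (if G.Adj u v then |g u - g v| else 0) by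
    exact H _ g hg rfl hsupp
  intro k
  induction k using Nat.strong_induction_on with
  | _ k IH =>
    intro g hg hk hsupp
    set S := C.filter fun u => g u ≠ 0 with hSdef
    have hzero : ∀ u ∈ C, u ∉ S → g u = 0 := by
      intro u hu hus
      by_contra h
      exact hus (Finset.mem_filter.mpr ⟨hu, h⟩)
    rcases S.eq_empty_or_nonempty with hS | hS
    · have hgz : ∀ u ∈ C, g u = 0 := fun u hu => hzero u hu (by simp [hS])
      have h1 : ∑ u ∈ C, g u = 0 := Finset.sum_eq_zero hgz
      have h2 : ∑ u ∈ C, ∑ v ∈ C, (if G.Adj u v then |g u - g v| else 0) = 0 :=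
        Finset.sum_eq_zero fun u hu => Finset.sum_eq_zero fun v hv => by
          simp [hgz u hu, hgz v hv]
      rw [h1, h2]; simp
    · obtain ⟨a, haS, hamin⟩ := S.exists_min_image g hS
      set m := g a with hm
      have hm0 : 0 < m := by
        have := (Finset.mem_filter.mp haS).2
        rcases lt_or_eq_of_le (hg a) with h | h
        · exact h
        · exact absurd h.symm this
      set g' : Fin n → ℝ := fun u => if u ∈ S then g u - m else 0 with hg'def
      have hgm : ∀ u ∈ S, m ≤ g u := hamin
      have hg' : ∀ u, 0 ≤ g' u := by
        intro u
        by_cases h : u ∈ S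
        · simp only [hg'def, if_pos h]; linarith [hgm u h]
        · simp [hg'def, h]
      have hSC : S ⊆ C := Finset.filter_subset _ _
      -- support of g' is strictly smaller
      have hsub : (C.filter fun u => g' u ≠ 0) ⊆ S.erase a := by
        intro u hu
        obtain ⟨huC, hne⟩ := Finset.mem_filter.mp hu
        have huS : u ∈ S := by
          by_contra h
          exact hne (by simp [hg'def, h])
        refine Finset.mem_erase.mpr ⟨?_, huS⟩
        rintro rfl
        exact hne (by simp [hg'def, huS, hm])
      have hcard' : (C.filter fun u => g' u ≠ 0).card < k := by
        calc (C.filter fun u => g' u ≠ 0).card ≤ (S.erase a).card := Finset.card_le_card hsub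
          _ < S.card := Finset.card_erase_lt_of_mem haS
          _ = k := hk
      -- pointwise decomposition
      have hpt : ∀ u ∈ C, ∀ v ∈ C,
          (if G.Adj u v then |g u - g v| else 0)
            = (if G.Adj u v then |g' u - g' v| else 0)
              + ((if G.Adj u v ∧ u ∈ S ∧ v ∉ S then (1:ℝ) else 0)
                + (if G.Adj u v ∧ u ∉ S ∧ v ∈ S then (1:ℝ) else 0)) * m := by
        intro u hu v hv
        by_cases ha' : G.Adj u v
        · rw [if_pos ha', if_pos ha']
          by_cases h1 : u ∈ S <;> by_cases h2 : v ∈ S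
          · rw [if_neg (by tauto), if_neg (by tauto)]
            simp only [hg'def, if_pos h1, if_pos h2]
            rw [show g u - m - (g v - m) = g u - g v by ring]
            ring
          · rw [if_pos ⟨ha', h1, h2⟩, if_neg (by tauto)]
            simp only [hg'def, if_pos h1, if_neg h2]
            rw [hzero v hv h2,
              abs_of_nonneg (by linarith [hgm u h1] : (0:ℝ) ≤ g u - 0),
              abs_of_nonneg (by linarith [hgm u h1] : (0:ℝ) ≤ g u - m - 0)]
            ring
          · rw [if_neg (by tauto), if_pos ⟨ha', h1, h2⟩]
            simp only [hg'def, if_neg h1, if_pos h2]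
            rw [hzero u hu h1,
              abs_of_nonpos (by linarith [hgm v h2] : (0:ℝ) - g v ≤ 0),
              abs_of_nonpos (by linarith [hgm v h2] : (0:ℝ) - (g v - m) ≤ 0)]
            ring
          · rw [if_neg (by tauto), if_neg (by tauto)]
            simp only [hg'def, if_neg h1, if_neg h2]
            rw [hzero u hu h1, hzero v hv h2]
            ring
        · simp [ha']
      -- conductance bound on the cut of S
      have hpos : (0:ℝ) < d * S.card := by
        have h1 : 0 < S.card := Finset.card_pos.mpr hS
        have h2 : (1:ℝ) ≤ d := by exact_mod_cast hd
        have h3 : (0:ℝ) < S.card := by exact_mod_cast h1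
        nlinarith
      have hcut_ge : φ * (d * S.card) ≤ (cutEdgesIn G C S : ℝ) := by
        have := hcond S hSC hS hsupp
        exact (le_div_iff₀ hpos).mp this
      set N1 := ∑ u ∈ C, ∑ v ∈ C, (if G.Adj u v ∧ u ∈ S ∧ v ∉ S then (1:ℝ) else 0) with hN1
      set N2 := ∑ u ∈ C, ∑ v ∈ C, (if G.Adj u v ∧ u ∉ S ∧ v ∈ S then (1:ℝ) else 0) with hN2
      have hN21 : N2 = N1 := cross_swap G C S
      have hN1cut : N1 = (cutEdgesIn G C S : ℝ) := (cutEdgesIn_eq_sum G C S hSC).symm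
      have hRHS : ∑ u ∈ C, ∑ v ∈ C, (if G.Adj u v then |g u - g v| else 0)
          = (∑ u ∈ C, ∑ v ∈ C, (if G.Adj u v then |g' u - g' v| else 0)) + (N1 + N2) * m := by
        rw [Finset.sum_congr rfl fun u hu => Finset.sum_congr rfl fun v hv => hpt u hu v hv]
        have hinner : ∀ u ∈ C,
            ∑ v ∈ C, ((if G.Adj u v then |g' u - g' v| else 0)
              + ((if G.Adj u v ∧ u ∈ S ∧ v ∉ S then (1:ℝ) else 0)
                + (if G.Adj u v ∧ u ∉ S ∧ v ∈ S then (1:ℝ) else 0)) * m)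
            = (∑ v ∈ C, (if G.Adj u v then |g' u - g' v| else 0))
              + ((∑ v ∈ C, (if G.Adj u v ∧ u ∈ S ∧ v ∉ S then (1:ℝ) else 0))
                + (∑ v ∈ C, (if G.Adj u v ∧ u ∉ S ∧ v ∈ S then (1:ℝ) else 0))) * m := by
          intro u hu
          rw [Finset.sum_add_distrib, ← Finset.sum_mul, Finset.sum_add_distrib]
        rw [Finset.sum_congr rfl hinner, Finset.sum_add_distrib, ← Finset.sum_mul,
          Finset.sum_add_distrib, hN1, hN2]
      have hsum_g : ∑ u ∈ C, g u = (∑ u ∈ C, g' u) + m * S.card := by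
        have hdec : ∀ u ∈ C, g u = g' u + (if u ∈ S then m else 0) := by
          intro u hu
          by_cases h : u ∈ S
          · simp only [hg'def, if_pos h]; ring
          · simp only [hg'def, if_neg h, hzero u hu h]; ring
        rw [Finset.sum_congr rfl hdec, Finset.sum_add_distrib]
        congr 1
        rw [Finset.sum_ite_mem, Finset.inter_eq_right.mpr hSC, Finset.sum_const]
        rw [nsmul_eq_mul]
        ring
      have hIH : 2 * (φ * d * ∑ u ∈ C, g' u)
          ≤ ∑ u ∈ C, ∑ v ∈ C, (if G.Adj u v then |g' u - g' v| else 0) := by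
        refine IH _ hcard' g' hg' rfl ?_
        have h2k : 2 * S.card ≤ C.card := hsupp
        omega
      have hSk : (0:ℝ) ≤ φ * d := by
        have : (0:ℝ) ≤ d := by positivity
        positivity
      rw [hRHS, hsum_g, hN21, hN1cut]
      have hm0' : 0 ≤ m := le_of_lt hm0
      nlinarith [hcut_ge, hIH, hm0']

lemma degR_eq (u : Fin n) :
    ((G.neighborSet u).ncard : ℝ) = ∑ v : Fin n, if G.Adj u v then (1:ℝ) else 0 := by
  rw [Finset.sum_boole, Set.ncard_eq_toFinset_card']
  norm_cast
  congr 1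
  ext v
  simp [SimpleGraph.mem_neighborSet]

lemma adjsum_le {C : Finset (Fin n)} (hmax : MaxDegreeLE G d) (u : Fin n) :
    ∑ v ∈ C, (if G.Adj u v then (1:ℝ) else 0) ≤ d := by
  calc ∑ v ∈ C, (if G.Adj u v then (1:ℝ) else 0)
      ≤ ∑ v : Fin n, (if G.Adj u v then (1:ℝ) else 0) :=
        Finset.sum_le_sum_of_subset_of_nonneg (Finset.subset_univ C)
          (by intro v _ _; positivity)
    _ = ((G.neighborSet u).ncard : ℝ) := (degR_eq G u).symm
    _ ≤ d := by exact_mod_cast hmax u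

lemma weighted_deg_le {C : Finset (Fin n)} (hmax : MaxDegreeLE G d)
    (g : Fin n → ℝ) (hg : ∀ u, 0 ≤ g u) :
    ∑ u ∈ C, ∑ v ∈ C, (if G.Adj u v then g u else 0) ≤ d * ∑ u ∈ C, g u := by
  rw [Finset.mul_sum]
  refine Finset.sum_le_sum fun u _ => ?_
  have h1 : ∑ v ∈ C, (if G.Adj u v then g u else 0)
      = g u * ∑ v ∈ C, (if G.Adj u v then (1:ℝ) else 0) := by
    rw [Finset.mul_sum]
    refine Finset.sum_congr rfl fun v _ => ?_
    by_cases h : G.Adj u v <;> simp [h]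
  rw [h1, mul_comm ((d:ℝ)) (g u)]
  exact mul_le_mul_of_nonneg_left (adjsum_le G d hmax u) (hg u)

lemma adj_ite_symm (C : Finset (Fin n)) (F : Fin n → Fin n → ℝ) :
    (∑ u ∈ C, ∑ v ∈ C, if G.Adj u v then F u v else 0)
      = ∑ u ∈ C, ∑ v ∈ C, if G.Adj u v then F v u else 0 := by
  rw [Finset.sum_comm]
  refine Finset.sum_congr rfl fun u _ => Finset.sum_congr rfl fun v _ => ?_
  by_cases ha : G.Adj u v
  · rw [if_pos ha, if_pos ha.symm]
  · rw [if_neg ha, if_neg fun h => ha h.symm]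

lemma poincare_half (hd : 1 ≤ d) (hmax : MaxDegreeLE G d) {C : Finset (Fin n)} {φ : ℝ}
    (hφ : 0 ≤ φ) (hcond : InnerConductanceGE G d C φ)
    (y : Fin n → ℝ) (hy : ∀ u, 0 ≤ y u)
    (hsupp : 2 * (C.filter fun u => y u ≠ 0).card ≤ C.card) :
    φ^2 * d * ∑ u ∈ C, (y u)^2 ≤ Dir G C y := by
  set Q := ∑ u ∈ C, (y u)^2 with hQ
  have hQ0 : 0 ≤ Q := Finset.sum_nonneg fun u _ => sq_nonneg _
  rcases eq_or_lt_of_le hQ0 with hQz | hQpos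
  · -- Q = 0
    rw [← hQz, mul_zero]
    exact Dir_nonneg G C y
  · have hsweep := sweep G d hd hφ hcond (fun u => (y u)^2)
      (fun u => sq_nonneg _) (by
        have : (C.filter fun u => (y u)^2 ≠ 0) = (C.filter fun u => y u ≠ 0) := by
          refine Finset.filter_congr fun u _ => ?_
          constructor
          · intro h h'; exact h (by rw [h']; ring)
          · intro h h'; exact h (pow_eq_zero_iff (by norm_num) |>.mp h')
        rw [this]; exact hsupp)
    -- rewrite |y u ^2 - y v ^2| and apply Cauchy-Schwarz
    have habs : ∀ u v : Fin n, |(y u)^2 - (y v)^2| = |y u - y v| * (y u + y v) := by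
      intro u v
      have : (y u)^2 - (y v)^2 = (y u - y v) * (y u + y v) := by ring
      rw [this, abs_mul,
        abs_of_nonneg (show (0:ℝ) ≤ y u + y v by linarith [hy u, hy v])]
    have hCS : (∑ u ∈ C, ∑ v ∈ C, (if G.Adj u v then |(y u)^2 - (y v)^2| else 0))^2
        ≤ (Dir G C y) * ∑ u ∈ C, ∑ v ∈ C, (if G.Adj u v then (y u + y v)^2 else 0) := by
      unfold Dir
      rw [← Finset.sum_product', ← Finset.sum_product', ← Finset.sum_product']
      have h1 : ∀ p : Fin n × Fin n,
          (if G.Adj p.1 p.2 then |(y p.1)^2 - (y p.2)^2| else 0)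
            = (if G.Adj p.1 p.2 then |y p.1 - y p.2| else 0)
              * (if G.Adj p.1 p.2 then (y p.1 + y p.2) else 0) := by
        intro p
        by_cases h : G.Adj p.1 p.2 <;> simp [h, habs]
      have h2 : ∀ p : Fin n × Fin n,
          (if G.Adj p.1 p.2 then ((y p.1) - (y p.2))^2 else 0)
            = (if G.Adj p.1 p.2 then |y p.1 - y p.2| else 0)^2 := by
        intro p
        by_cases h : G.Adj p.1 p.2 <;> simp [h, sq_abs]
      have h3 : ∀ p : Fin n × Fin n,
          (if G.Adj p.1 p.2 then ((y p.1) + (y p.2))^2 else 0)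
            = (if G.Adj p.1 p.2 then (y p.1 + y p.2) else 0)^2 := by
        intro p
        by_cases h : G.Adj p.1 p.2 <;> simp [h]
      rw [Finset.sum_congr rfl fun p (_ : p ∈ C ×ˢ C) => h1 p,
        Finset.sum_congr rfl fun p (_ : p ∈ C ×ˢ C) => h2 p,
        Finset.sum_congr rfl fun p (_ : p ∈ C ×ˢ C) => h3 p]
      exact Finset.sum_mul_sq_le_sq_mul_sq _ _ _
    have hB : ∑ u ∈ C, ∑ v ∈ C, (if G.Adj u v then (y u + y v)^2 else 0) ≤ 4 * d * Q := by
      have hpt : ∀ u v : Fin n, (if G.Adj u v then (y u + y v)^2 else 0)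
          ≤ (if G.Adj u v then 2*(y u)^2 else 0) + (if G.Adj u v then 2*(y v)^2 else 0) := by
        intro u v
        by_cases h : G.Adj u v <;> simp [h]
        nlinarith [sq_nonneg (y u - y v)]
      calc ∑ u ∈ C, ∑ v ∈ C, (if G.Adj u v then (y u + y v)^2 else 0)
          ≤ ∑ u ∈ C, ∑ v ∈ C, ((if G.Adj u v then 2*(y u)^2 else 0)
              + (if G.Adj u v then 2*(y v)^2 else 0)) :=
            Finset.sum_le_sum fun u _ => Finset.sum_le_sum fun v _ => hpt u v
        _ = (∑ u ∈ C, ∑ v ∈ C, (if G.Adj u v then 2*(y u)^2 else 0))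
              + ∑ u ∈ C, ∑ v ∈ C, (if G.Adj u v then 2*(y v)^2 else 0) := by
            rw [← Finset.sum_add_distrib]
            exact Finset.sum_congr rfl fun u _ => Finset.sum_add_distrib
        _ = 2 * ∑ u ∈ C, ∑ v ∈ C, (if G.Adj u v then 2*(y u)^2 else 0) := by
            rw [adj_ite_symm G C (fun u v => 2*(y v)^2)]
            ring
        _ ≤ 2 * ((d:ℝ) * ∑ u ∈ C, 2*(y u)^2) := by
            have := weighted_deg_le G d (C := C) hmax (fun u => 2*(y u)^2)
              (fun u => by positivity)
            linarith
        _ = 4 * d * Q := by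
            rw [hQ, Finset.mul_sum, Finset.mul_sum, Finset.mul_sum]
            exact Finset.sum_congr rfl fun u _ => by ring
    -- combine
    have hd0 : (0:ℝ) < d := by exact_mod_cast hd
    have hDir0 : 0 ≤ Dir G C y := Dir_nonneg G C y
    set E := ∑ u ∈ C, ∑ v ∈ C, (if G.Adj u v then |(y u)^2 - (y v)^2| else 0) with hE
    have hsweep' : 2 * (φ * d * Q) ≤ E := by
      rw [hE, hQ]
      simpa using hsweep
    have hE0 : 0 ≤ E := by positivity
    have e1 : (2 * (φ * d * Q))^2 ≤ E^2 := by
      have h2' : 0 ≤ 2 * (φ * d * Q) := by positivity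
      nlinarith
    have e2 : E^2 ≤ Dir G C y * (4 * d * Q) := le_trans hCS (mul_le_mul_of_nonneg_left hB hDir0)
    have e3 : (4 * (d:ℝ) * Q) * (φ^2 * d * Q) ≤ (4 * (d:ℝ) * Q) * Dir G C y := by
      nlinarith [e1, e2]
    exact le_of_mul_le_mul_left e3 (by positivity)


lemma exists_median (C : Finset (Fin n)) (hC : C.Nonempty) (x : Fin n → ℝ) :
    ∃ m : ℝ, 2 * (C.filter fun u => m < x u).card ≤ C.card
      ∧ 2 * (C.filter fun u => x u < m).card ≤ C.card := by
  classical
  set mm := C.card with hmm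
  have hmm0 : 0 < mm := Finset.card_pos.mpr hC
  let e : Fin mm ≃o {y // y ∈ C} := C.orderIsoOfFin rfl
  let h : Fin mm → ℝ := fun i => x (e i)
  let σ := Tuple.sort h
  have hmono : Monotone (h ∘ σ) := Tuple.monotone_sort h
  let kk : Fin mm := ⟨mm / 2, by omega⟩
  refine ⟨h (σ kk), ?_, ?_⟩
  · -- values above the median are at positions > kk
    have hinj : ∀ P : Fin n → Prop, ∀ T : Finset ℕ,
        (∀ u (hu : u ∈ C), P u → ((σ.symm (e.symm ⟨u, hu⟩)) : ℕ) ∈ T) →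
        (C.filter fun u => P u).card ≤ T.card := by
      intro P T hmaps
      refine Finset.card_le_card_of_injOn
        (fun u => if hu : u ∈ C then ((σ.symm (e.symm ⟨u, hu⟩)) : ℕ) else 0) ?_ ?_
      · intro u hu
        obtain ⟨huC, hPu⟩ := Finset.mem_filter.mp hu
        simp only [dif_pos huC]
        exact hmaps u huC hPu
      · intro u hu v hv huv
        obtain ⟨huC, _⟩ := Finset.mem_filter.mp (Finset.mem_coe.mp hu)
        obtain ⟨hvC, _⟩ := Finset.mem_filter.mp (Finset.mem_coe.mp hv)
        simp only [dif_pos huC, dif_pos hvC] at huv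
        have h1 : σ.symm (e.symm ⟨u, huC⟩) = σ.symm (e.symm ⟨v, hvC⟩) := Fin.val_injective huv
        have h2 : e.symm ⟨u, huC⟩ = e.symm ⟨v, hvC⟩ := σ.symm.injective h1
        have h3 : (⟨u, huC⟩ : {y // y ∈ C}) = ⟨v, hvC⟩ := e.symm.injective h2
        exact Subtype.mk.injEq .. ▸ (by injection h3)
      -- positions of large values
    refine le_trans (Nat.mul_le_mul_left 2 (hinj _ (Finset.Ico (mm/2+1) mm) ?_)) ?_
    · intro u hu hPu
      set j := σ.symm (e.symm ⟨u, hu⟩) with hj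
      have hval : h (σ j) = x u := by
        simp [hj, h, σ]
      rw [Finset.mem_Ico]
      constructor
      · by_contra hlt
        push_neg at hlt
        have hjk : j ≤ kk := by
          rw [Fin.le_def]
          simp only [kk]
          omega
        have := hmono hjk
        simp only [Function.comp_apply] at this
        rw [hval] at this
        exact absurd hPu (not_lt.mpr this)
      · exact j.isLt
    · rw [Nat.card_Ico]
      omega
  · have hinj : ∀ P : Fin n → Prop, ∀ T : Finset ℕ,
        (∀ u (hu : u ∈ C), P u → ((σ.symm (e.symm ⟨u, hu⟩)) : ℕ) ∈ T) →
        (C.filter fun u => P u).card ≤ T.card := by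
      intro P T hmaps
      refine Finset.card_le_card_of_injOn
        (fun u => if hu : u ∈ C then ((σ.symm (e.symm ⟨u, hu⟩)) : ℕ) else 0) ?_ ?_
      · intro u hu
        obtain ⟨huC, hPu⟩ := Finset.mem_filter.mp hu
        simp only [dif_pos huC]
        exact hmaps u huC hPu
      · intro u hu v hv huv
        obtain ⟨huC, _⟩ := Finset.mem_filter.mp (Finset.mem_coe.mp hu)
        obtain ⟨hvC, _⟩ := Finset.mem_filter.mp (Finset.mem_coe.mp hv)
        simp only [dif_pos huC, dif_pos hvC] at huv
        have h1 : σ.symm (e.symm ⟨u, huC⟩) = σ.symm (e.symm ⟨v, hvC⟩) := Fin.val_injective huv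
        have h2 : e.symm ⟨u, huC⟩ = e.symm ⟨v, hvC⟩ := σ.symm.injective h1
        have h3 : (⟨u, huC⟩ : {y // y ∈ C}) = ⟨v, hvC⟩ := e.symm.injective h2
        exact Subtype.mk.injEq .. ▸ (by injection h3)
    refine le_trans (Nat.mul_le_mul_left 2 (hinj _ (Finset.range (mm/2)) ?_)) ?_
    · intro u hu hPu
      set j := σ.symm (e.symm ⟨u, hu⟩) with hj
      have hval : h (σ j) = x u := by
        simp [hj, h, σ]
      rw [Finset.mem_range]
      by_contra hge
      push_neg at hge
      have hjk : kk ≤ j := by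
        rw [Fin.le_def]
        simp only [kk]
        omega
      have := hmono hjk
      simp only [Function.comp_apply] at this
      rw [hval] at this
      exact absurd hPu (not_lt.mpr this)
    · rw [Finset.card_range]
      omega


lemma ptwise_split (a b m : ℝ) :
    (max (a - m) 0 - max (b - m) 0)^2 + (max (m - a) 0 - max (m - b) 0)^2 ≤ (a - b)^2 := by
  rcases le_total a m with h1 | h1 <;> rcases le_total b m with h2 | h2
  · rw [max_eq_right (by linarith), max_eq_right (by linarith),
      max_eq_left (by linarith), max_eq_left (by linarith)]
    nlinarith
  · rw [max_eq_right (by linarith), max_eq_left (by linarith),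
      max_eq_left (by linarith), max_eq_right (by linarith)]
    nlinarith
  · rw [max_eq_left (by linarith), max_eq_right (by linarith),
      max_eq_right (by linarith), max_eq_left (by linarith)]
    nlinarith
  · rw [max_eq_left (by linarith), max_eq_left (by linarith),
      max_eq_right (by linarith), max_eq_right (by linarith)]
    nlinarith

lemma poincare (hd : 1 ≤ d) (hmax : MaxDegreeLE G d) {C : Finset (Fin n)} {φ : ℝ}
    (hφ : 0 ≤ φ) (hcond : InnerConductanceGE G d C φ)
    (x : Fin n → ℝ) (hsum : ∑ u ∈ C, x u = 0) :
    φ^2 * d * ∑ u ∈ C, (x u)^2 ≤ Dir G C x := by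
  rcases C.eq_empty_or_nonempty with hC | hC
  · subst hC
    simp [Dir]
  obtain ⟨med, hmed1, hmed2⟩ := exists_median C hC x
  set y : Fin n → ℝ := fun u => max (x u - med) 0 with hy
  set z : Fin n → ℝ := fun u => max (med - x u) 0 with hz
  have hy0 : ∀ u, 0 ≤ y u := fun u => le_max_right _ _
  have hz0 : ∀ u, 0 ≤ z u := fun u => le_max_right _ _
  have hysupp : 2 * (C.filter fun u => y u ≠ 0).card ≤ C.card := by
    have : (C.filter fun u => y u ≠ 0) = (C.filter fun u => med < x u) := by
      refine Finset.filter_congr fun u _ => ?_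
      simp only [hy]
      constructor
      · intro hne
        by_contra hle
        push_neg at hle
        exact hne (max_eq_right (by linarith))
      · intro hlt
        rw [max_eq_left (by linarith)]
        intro h0
        linarith
    rw [this]; exact hmed1
  have hzsupp : 2 * (C.filter fun u => z u ≠ 0).card ≤ C.card := by
    have : (C.filter fun u => z u ≠ 0) = (C.filter fun u => x u < med) := by
      refine Finset.filter_congr fun u _ => ?_
      simp only [hz]
      constructor
      · intro hne
        by_contra hle
        push_neg at hle
        exact hne (max_eq_right (by linarith))
      · intro hlt
        rw [max_eq_left (by linarith)]
        intro h0
        linarith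
    rw [this]; exact hmed2
  have hpy := poincare_half G d hd hmax hφ hcond y hy0 hysupp
  have hpz := poincare_half G d hd hmax hφ hcond z hz0 hzsupp
  have hDir : Dir G C y + Dir G C z ≤ Dir G C x := by
    unfold Dir
    rw [← Finset.sum_add_distrib]
    rw [Finset.sum_congr rfl fun u (_ : u ∈ C) => (Finset.sum_add_distrib).symm]
    refine Finset.sum_le_sum fun u _ => Finset.sum_le_sum fun v _ => ?_
    by_cases h : G.Adj u v
    · simp only [if_pos h]
      exact ptwise_split (x u) (x v) med
    · simp [h]
  have hnorm : ∑ u ∈ C, (x u)^2 ≤ (∑ u ∈ C, (y u)^2) + ∑ u ∈ C, (z u)^2 := by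
    have key : ∀ u, (x u - med)^2 = (y u)^2 + (z u)^2 := by
      intro u
      rcases le_total (x u) med with h | h
      · simp only [hy, hz]
        rw [max_eq_right (by linarith), max_eq_left (by linarith)]
        ring
      · simp only [hy, hz]
        rw [max_eq_left (by linarith), max_eq_right (by linarith)]
        ring
    have expand : ∑ u ∈ C, (x u - med)^2
        = (∑ u ∈ C, (x u)^2) - 2 * med * (∑ u ∈ C, x u) + C.card * med^2 := by
      rw [Finset.sum_congr rfl fun u (_ : u ∈ C) =>
        (show (x u - med)^2 = (x u)^2 - 2*med*(x u) + med^2 by ring)]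
      rw [Finset.sum_add_distrib, Finset.sum_sub_distrib, Finset.sum_const,
        ← Finset.mul_sum, nsmul_eq_mul]
      try ring
    have h1 : ∑ u ∈ C, (x u - med)^2 = (∑ u ∈ C, (y u)^2) + ∑ u ∈ C, (z u)^2 := by
      rw [Finset.sum_congr rfl fun u (_ : u ∈ C) => key u, Finset.sum_add_distrib]
    have h2 : (0:ℝ) ≤ C.card * med^2 := by positivity
    rw [hsum] at expand
    nlinarith [expand, h1]
  have hcoef : (0:ℝ) ≤ φ^2 * d := by positivity
  calc φ^2 * d * ∑ u ∈ C, (x u)^2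
      ≤ φ^2 * d * ((∑ u ∈ C, (y u)^2) + ∑ u ∈ C, (z u)^2) :=
        mul_le_mul_of_nonneg_left hnorm hcoef
    _ = φ^2 * d * (∑ u ∈ C, (y u)^2) + φ^2 * d * (∑ u ∈ C, (z u)^2) := by ring
    _ ≤ Dir G C y + Dir G C z := add_le_add hpy hpz
    _ ≤ Dir G C x := hDir



lemma lazyWalk_isHermitian : (lazyWalk G d).IsHermitian := by
  ext u v
  simp only [Matrix.conjTranspose_apply, lazyWalk, Matrix.of_apply, star_trivial]
  by_cases h : u = v
  · subst h; rfl
  · rw [if_neg h, if_neg (Ne.symm h)]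
    by_cases ha : G.Adj u v
    · rw [if_pos ha, if_pos ha.symm]
    · rw [if_neg ha, if_neg (fun hs => ha hs.symm)]

lemma mulVec_apply (x : Fin n → ℝ) (u : Fin n) :
    (lazyWalk G d).mulVec x u
      = (1 - ((G.neighborSet u).ncard : ℝ)/(2*d)) * x u
        + (1/(2*d)) * ∑ v, (if G.Adj u v then x v else 0) := by
  have key : ∀ v, lazyWalk G d u v * x v
      = (if v = u then (1 - ((G.neighborSet u).ncard : ℝ)/(2*d)) * x u else 0)
        + (if G.Adj u v then 1/(2*d) * x v else 0) := by
    intro v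
    by_cases h : v = u
    · subst h
      simp [lazyWalk, SimpleGraph.irrefl]
    · have h' : u ≠ v := Ne.symm h
      by_cases ha : G.Adj u v <;> simp [lazyWalk, h, h', ha]
  rw [Matrix.mulVec, dotProduct]
  rw [Finset.sum_congr rfl (fun v _ => key v), Finset.sum_add_distrib,
    Finset.sum_ite_eq' Finset.univ u
      (fun _ => (1 - ((G.neighborSet u).ncard : ℝ)/(2*d)) * x u)]
  simp [Finset.mul_sum, mul_ite]

lemma quad_eq (hd : (d:ℝ) ≠ 0) (x : Fin n → ℝ) :
    ∑ u, x u * (lazyWalk G d).mulVec x u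
      = (∑ u, (x u)^2) - (1/(4*d)) * Dir G Finset.univ x := by
  have hS : ∀ u : Fin n, ∑ v, (if G.Adj u v then (x u)^2 else 0)
      = ((G.neighborSet u).ncard : ℝ) * (x u)^2 := by
    intro u
    rw [degR_eq]
    rw [Finset.sum_mul]
    refine Finset.sum_congr rfl fun v _ => ?_
    by_cases ha : G.Adj u v <;> simp [ha]
  have hsymm : ∀ F : Fin n → Fin n → ℝ,
      (∑ u, ∑ v, if G.Adj u v then F u v else 0)
        = ∑ u, ∑ v, if G.Adj u v then F v u else 0 := by
    intro F
    rw [Finset.sum_comm]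
    refine Finset.sum_congr rfl fun u _ => Finset.sum_congr rfl fun v _ => ?_
    by_cases ha : G.Adj u v
    · rw [if_pos ha, if_pos ha.symm]
    · rw [if_neg ha, if_neg fun h => ha h.symm]
  have hDir : Dir G Finset.univ x
      = 2 * (∑ u, ((G.neighborSet u).ncard : ℝ) * (x u)^2)
        - 2 * ∑ u, ∑ v, (if G.Adj u v then x u * x v else 0) := by
    unfold Dir
    have e1 : ∀ u v : Fin n, (if G.Adj u v then (x u - x v)^2 else 0)
        = (if G.Adj u v then (x u)^2 else 0) + (if G.Adj u v then (x v)^2 else 0)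
          - 2 * (if G.Adj u v then x u * x v else 0) := by
      intro u v; by_cases ha : G.Adj u v <;> simp [ha] <;> ring
    rw [Finset.sum_congr rfl fun u _ => Finset.sum_congr rfl fun v _ => e1 u v]
    simp only [Finset.sum_sub_distrib, Finset.sum_add_distrib, ← Finset.mul_sum]
    rw [hsymm (fun u v => (x v)^2)]
    simp only [Finset.sum_congr rfl fun u (_ : u ∈ Finset.univ) => hS u]
    ring
  have hL : ∑ u, x u * (lazyWalk G d).mulVec x u
      = (∑ u, (x u)^2) - (1/(2*d)) * (∑ u, ((G.neighborSet u).ncard : ℝ) * (x u)^2)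
        + (1/(2*d)) * ∑ u, ∑ v, (if G.Adj u v then x u * x v else 0) := by
    rw [Finset.sum_congr rfl fun u _ => by rw [mulVec_apply]]
    have e2 : ∀ u : Fin n, x u * ((1 - ((G.neighborSet u).ncard : ℝ)/(2*d)) * x u
        + (1/(2*d)) * ∑ v, (if G.Adj u v then x v else 0))
        = (x u)^2 - (1/(2*d)) * (((G.neighborSet u).ncard : ℝ) * (x u)^2)
          + (1/(2*d)) * ∑ v, (if G.Adj u v then x u * x v else 0) := by
      intro u
      have : ∑ v, (if G.Adj u v then x u * x v else 0)
          = x u * ∑ v, (if G.Adj u v then x v else 0) := by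
        rw [Finset.mul_sum]
        exact Finset.sum_congr rfl fun v _ => by by_cases ha : G.Adj u v <;> simp [ha]
      rw [this]; ring
    rw [Finset.sum_congr rfl fun u _ => e2 u]
    simp only [Finset.sum_add_distrib, Finset.sum_sub_distrib, ← Finset.mul_sum]
  rw [hL, hDir]
  field_simp
  ring



end Aux

namespace Aux

def toE (x : Fin n → ℝ) : EuclideanSpace ℝ (Fin n) := WithLp.toLp 2 x

@[simp] lemma toE_apply (x : Fin n → ℝ) (u : Fin n) : toE x u = x u := rfl

variable (M : Matrix (Fin n) (Fin n) ℝ)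

lemma inner_sum (x y : EuclideanSpace ℝ (Fin n)) : ⟪x, y⟫ = ∑ u, x u * y u := by
  simp [PiLp.inner_apply, RCLike.inner_apply, conj_trivial]
  exact Finset.sum_congr rfl fun _ _ => mul_comm _ _

lemma nsq_eq (y : EuclideanSpace ℝ (Fin n)) : ‖y‖^2 = ∑ u, (y u)^2 := by
  rw [← real_inner_self_eq_norm_sq, inner_sum]
  simp [sq]

variable (hM : M.IsHermitian)

lemma repr_toE_mulVec (y : Fin n → ℝ) (i : Fin n) :
    hM.eigenvectorBasis.repr (toE (M.mulVec y)) i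
      = hM.eigenvalues i * hM.eigenvectorBasis.repr (toE y) i := by
  rw [OrthonormalBasis.repr_apply_apply, OrthonormalBasis.repr_apply_apply,
    inner_sum, inner_sum]
  simp only [toE_apply]
  have h2 : ∀ v, M.mulVec (hM.eigenvectorBasis i) v
      = hM.eigenvalues i * (hM.eigenvectorBasis i : EuclideanSpace ℝ (Fin n)) v :=
    fun v => congrFun (hM.mulVec_eigenvectorBasis i) v
  have h1 : ∑ u, (hM.eigenvectorBasis i : EuclideanSpace ℝ (Fin n)) u * (M.mulVec y) u
      = ∑ v, (M.mulVec (hM.eigenvectorBasis i)) v * y v := by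
    have hx : ∀ u, (hM.eigenvectorBasis i : EuclideanSpace ℝ (Fin n)) u * (M.mulVec y) u
        = ∑ v, M u v * ((hM.eigenvectorBasis i : EuclideanSpace ℝ (Fin n)) u * y v) := by
      intro u
      rw [Matrix.mulVec, dotProduct, Finset.mul_sum]
      exact Finset.sum_congr rfl fun v _ => by ring
    rw [Finset.sum_congr rfl fun u _ => hx u, Finset.sum_comm]
    refine Finset.sum_congr rfl fun v _ => ?_
    rw [Matrix.mulVec, dotProduct, Finset.sum_mul]
    refine Finset.sum_congr rfl fun u _ => ?_
    have hsy : M u v = M v u := by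
      conv_lhs => rw [← hM.eq]
      simp [Matrix.conjTranspose_apply]
    rw [hsy]; ring
  rw [h1, Finset.mul_sum]
  refine Finset.sum_congr rfl fun v _ => ?_
  rw [h2 v]
  ring

lemma repr_pow (t : ℕ) (y : Fin n → ℝ) (i : Fin n) :
    hM.eigenvectorBasis.repr (toE ((M ^ t).mulVec y)) i
      = hM.eigenvalues i ^ t * hM.eigenvectorBasis.repr (toE y) i := by
  induction t with
  | zero => simp [Matrix.one_mulVec]
  | succ t ih =>
      have hstep : (M ^ (t+1)).mulVec y = M.mulVec ((M ^ t).mulVec y) := by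
        rw [Matrix.mulVec_mulVec, ← pow_succ']
      rw [hstep, repr_toE_mulVec M hM, ih]
      ring

lemma norm_sq_pow (t : ℕ) (y : Fin n → ℝ) :
    ‖toE ((M ^ t).mulVec y)‖^2
      = ∑ i, hM.eigenvalues i ^ (2*t) * (hM.eigenvectorBasis.repr (toE y) i)^2 := by
  have h0 : ∀ z : EuclideanSpace ℝ (Fin n), ‖z‖^2 = ∑ i, (hM.eigenvectorBasis.repr z i)^2 := by
    intro z
    rw [← hM.eigenvectorBasis.repr.norm_map z, nsq_eq]
  rw [h0]
  refine Finset.sum_congr rfl fun i _ => ?_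
  rw [repr_pow M hM]
  rw [mul_pow, ← pow_mul, mul_comm t 2]

lemma norm_pow_le (hle : ∀ i, 0 ≤ hM.eigenvalues i ∧ hM.eigenvalues i ≤ 1)
    {t t' : ℕ} (htt : t ≤ t') (y : Fin n → ℝ) :
    ‖toE ((M ^ t').mulVec y)‖^2 ≤ ‖toE ((M ^ t).mulVec y)‖^2 := by
  rw [norm_sq_pow M hM, norm_sq_pow M hM]
  refine Finset.sum_le_sum fun i _ => ?_
  have h1 := (hle i).1
  have h2 := (hle i).2
  have : hM.eigenvalues i ^ (2*t') ≤ hM.eigenvalues i ^ (2*t) :=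
    pow_le_pow_of_le_one h1 h2 (by omega)
  have hsq : 0 ≤ (hM.eigenvectorBasis.repr (toE y) i)^2 := sq_nonneg _
  nlinarith

lemma trace_pow (t : ℕ) :
    ∑ u : Fin n, ‖toE ((M ^ t).mulVec (fun w => if w = u then (1:ℝ) else 0))‖^2
      = ∑ i, hM.eigenvalues i ^ (2*t) := by
  have hrepr : ∀ (u i : Fin n),
      hM.eigenvectorBasis.repr (toE (fun w => if w = u then (1:ℝ) else 0)) i
        = (hM.eigenvectorBasis i : EuclideanSpace ℝ (Fin n)) u := by
    intro u i
    rw [OrthonormalBasis.repr_apply_apply, inner_sum]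
    simp only [toE_apply]
    rw [Finset.sum_congr rfl (fun v _ => show
      (hM.eigenvectorBasis i : EuclideanSpace ℝ (Fin n)) v * (if v = u then (1:ℝ) else 0)
        = if v = u then (hM.eigenvectorBasis i : EuclideanSpace ℝ (Fin n)) v else 0 from by
      by_cases h : v = u <;> simp [h])]
    simp
  have hcol : ∀ i : Fin n, ∑ u : Fin n, (hM.eigenvectorBasis i : EuclideanSpace ℝ (Fin n)) u ^2 = 1 := by
    intro i
    rw [← nsq_eq]
    rw [hM.eigenvectorBasis.orthonormal.1 i]
    norm_num
  rw [Finset.sum_congr rfl fun u _ => norm_sq_pow M hM t _]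
  rw [Finset.sum_comm]
  refine Finset.sum_congr rfl fun i _ => ?_
  rw [Finset.sum_congr rfl fun u (_ : u ∈ Finset.univ) => by rw [hrepr u i], ← Finset.mul_sum, hcol i, mul_one]



end Aux

namespace Aux
variable {n : ℕ} (G : SimpleGraph (Fin n)) (d : ℕ)

lemma Dir_le (hmax : MaxDegreeLE G d) (C : Finset (Fin n)) (x : Fin n → ℝ) :
    Dir G C x ≤ 4 * d * ∑ u ∈ C, (x u)^2 := by
  have hpt : ∀ u v : Fin n, (if G.Adj u v then (x u - x v)^2 else 0)
      ≤ (if G.Adj u v then 2*(x u)^2 else 0) + (if G.Adj u v then 2*(x v)^2 else 0) := by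
    intro u v
    by_cases h : G.Adj u v <;> simp [h]
    nlinarith [sq_nonneg (x u + x v)]
  calc Dir G C x
      ≤ ∑ u ∈ C, ∑ v ∈ C, ((if G.Adj u v then 2*(x u)^2 else 0)
          + (if G.Adj u v then 2*(x v)^2 else 0)) :=
        Finset.sum_le_sum fun u _ => Finset.sum_le_sum fun v _ => hpt u v
    _ = (∑ u ∈ C, ∑ v ∈ C, (if G.Adj u v then 2*(x u)^2 else 0))
          + ∑ u ∈ C, ∑ v ∈ C, (if G.Adj u v then 2*(x v)^2 else 0) := by
        rw [← Finset.sum_add_distrib]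
        exact Finset.sum_congr rfl fun u _ => Finset.sum_add_distrib
    _ = 2 * ∑ u ∈ C, ∑ v ∈ C, (if G.Adj u v then 2*(x u)^2 else 0) := by
        rw [adj_ite_symm G C (fun u v => 2*(x v)^2)]
        ring
    _ ≤ 2 * ((d:ℝ) * ∑ u ∈ C, 2*(x u)^2) := by
        have := weighted_deg_le G d (C := C) hmax (fun u => 2*(x u)^2)
          (fun u => by positivity)
        linarith
    _ = 4 * d * ∑ u ∈ C, (x u)^2 := by
        rw [Finset.mul_sum, Finset.mul_sum, Finset.mul_sum]
        exact Finset.sum_congr rfl fun u _ => by ring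

lemma eig_bounds (hd : 1 ≤ d) (hmax : MaxDegreeLE G d) (i : Fin n) :
    0 ≤ (lazyWalk_isHermitian G d).eigenvalues i
      ∧ (lazyWalk_isHermitian G d).eigenvalues i ≤ 1 := by
  set hM := lazyWalk_isHermitian G d
  set lam := hM.eigenvalues i with hlam
  set v : Fin n → ℝ := fun u => (hM.eigenvectorBasis i : EuclideanSpace ℝ (Fin n)) u with hv
  have hmv : ∀ u, (lazyWalk G d).mulVec v u = lam * v u :=
    fun u => congrFun (hM.mulVec_eigenvectorBasis i) u
  have hv2 : ∑ u, (v u)^2 = 1 := by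
    have := nsq_eq (toE v)
    simp only [toE_apply] at this
    rw [← this]
    have hnorm : ‖toE v‖ = 1 := by
      have : toE v = hM.eigenvectorBasis i := rfl
      rw [this]
      exact hM.eigenvectorBasis.orthonormal.1 i
    rw [hnorm]; norm_num
  have hquad : ∑ u, v u * (lazyWalk G d).mulVec v u = lam := by
    rw [Finset.sum_congr rfl fun u _ => by rw [hmv u]]
    have : ∀ u, v u * (lam * v u) = lam * (v u)^2 := fun u => by ring
    rw [Finset.sum_congr rfl fun u _ => this u, ← Finset.mul_sum, hv2, mul_one]
  have hdne : ((d:ℝ)) ≠ 0 := by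
    have : (0:ℝ) < d := by exact_mod_cast hd
    exact ne_of_gt this
  have hq := quad_eq G d hdne v
  rw [hquad, hv2] at hq
  have hDir0 : 0 ≤ Dir G Finset.univ v := Dir_nonneg G Finset.univ v
  have hDir4 : Dir G Finset.univ v ≤ 4 * d * ∑ u, (v u)^2 := Dir_le G d hmax Finset.univ v
  rw [hv2, mul_one] at hDir4
  have hd0 : (0:ℝ) < d := by exact_mod_cast hd
  constructor
  · -- lam = 1 - (1/(4d)) * Dir ≥ 1 - (1/(4d)) * 4d = 0
    have h1 : (1/(4*(d:ℝ))) * Dir G Finset.univ v ≤ (1/(4*(d:ℝ))) * (4*d) := by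
      apply mul_le_mul_of_nonneg_left hDir4 (by positivity)
    have h2 : (1/(4*(d:ℝ))) * (4*(d:ℝ)) = 1 := by field_simp
    linarith
  · have h1 : 0 ≤ (1/(4*(d:ℝ))) * Dir G Finset.univ v := by positivity
    linarith

lemma quad_le_cluster (hd : 1 ≤ d) (hmax : MaxDegreeLE G d) {φ : ℝ} (hφ : 0 ≤ φ)
    {C₁ C₂ : Finset (Fin n)} (hdisj : Disjoint C₁ C₂) (hun : C₁ ∪ C₂ = Finset.univ)
    (h1 : InnerConductanceGE G d C₁ φ) (h2 : InnerConductanceGE G d C₂ φ)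
    (x : Fin n → ℝ) (hs1 : ∑ u ∈ C₁, x u = 0) (hs2 : ∑ u ∈ C₂, x u = 0) :
    ∑ u, x u * (lazyWalk G d).mulVec x u ≤ (1 - φ^2/4) * ∑ u, (x u)^2 := by
  have hd0 : (0:ℝ) < d := by exact_mod_cast hd
  have hdne : ((d:ℝ)) ≠ 0 := ne_of_gt hd0
  rw [quad_eq G d hdne x]
  have hnn : ∀ (D E : Finset (Fin n)), D ⊆ E → ∀ u,
      ∑ v ∈ D, (if G.Adj u v then (x u - x v)^2 else 0)
        ≤ ∑ v ∈ E, (if G.Adj u v then (x u - x v)^2 else 0) := by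
    intro D E hDE u
    refine Finset.sum_le_sum_of_subset_of_nonneg hDE fun v _ _ => ?_
    by_cases h : G.Adj u v <;> simp [h, sq_nonneg]
  have hsplit : Dir G C₁ x + Dir G C₂ x ≤ Dir G Finset.univ x := by
    unfold Dir
    conv_rhs => rw [← hun]
    rw [Finset.sum_union hdisj]
    refine add_le_add ?_ ?_
    · exact Finset.sum_le_sum fun u _ => hnn C₁ (C₁ ∪ C₂) Finset.subset_union_left u
    · exact Finset.sum_le_sum fun u _ => hnn C₂ (C₁ ∪ C₂) Finset.subset_union_right u
  have hlow : φ^2 * d * ∑ u, (x u)^2 ≤ Dir G Finset.univ x := by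
    have p1 := poincare G d hd hmax hφ h1 x hs1
    have p2 := poincare G d hd hmax hφ h2 x hs2
    have hx2 : ∑ u, (x u)^2 = (∑ u ∈ C₁, (x u)^2) + ∑ u ∈ C₂, (x u)^2 := by
      rw [← Finset.sum_union hdisj, hun]
    rw [hx2, mul_add]
    exact le_trans (add_le_add p1 p2) hsplit
  have hid : (1/(4*(d:ℝ))) * (φ^2 * d * ∑ u, (x u)^2) = φ^2/4 * ∑ u, (x u)^2 := by
    field_simp
  have hmul : (1/(4*(d:ℝ))) * (φ^2 * d * ∑ u, (x u)^2)
      ≤ (1/(4*(d:ℝ))) * Dir G Finset.univ x :=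
    mul_le_mul_of_nonneg_left hlow (by positivity)
  rw [hid] at hmul
  linarith

lemma sum3_prod (V W : Fin 3 → Fin n → ℝ) (c e : Fin 3 → ℝ) :
    ∑ u : Fin n, (∑ j : Fin 3, c j * V j u) * (∑ k : Fin 3, e k * W k u)
      = ∑ j : Fin 3, ∑ k : Fin 3, c j * e k * ∑ u : Fin n, V j u * W k u := by
  have h1 : ∀ u : Fin n, (∑ j : Fin 3, c j * V j u) * (∑ k : Fin 3, e k * W k u)
      = ∑ j : Fin 3, ∑ k : Fin 3, (c j * e k) * (V j u * W k u) := by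
    intro u
    rw [Finset.sum_mul_sum]
    exact Finset.sum_congr rfl fun j _ => Finset.sum_congr rfl fun k _ => by ring
  rw [Finset.sum_congr rfl fun u (_ : u ∈ Finset.univ) => h1 u]
  rw [Finset.sum_comm]
  refine Finset.sum_congr rfl fun j _ => ?_
  rw [Finset.sum_comm]
  refine Finset.sum_congr rfl fun k _ => ?_
  rw [Finset.mul_sum]

lemma bad_card (hd : 1 ≤ d) (hmax : MaxDegreeLE G d) {φ : ℝ} (hφ : 0 ≤ φ)
    {C₁ C₂ : Finset (Fin n)} (hdisj : Disjoint C₁ C₂) (hun : C₁ ∪ C₂ = Finset.univ)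
    (h1 : InnerConductanceGE G d C₁ φ) (h2 : InnerConductanceGE G d C₂ φ) :
    (Finset.univ.filter fun i =>
      1 - φ^2/4 < (lazyWalk_isHermitian G d).eigenvalues i).card ≤ 2 := by
  set hM := lazyWalk_isHermitian G d
  by_contra hcon
  push_neg at hcon
  have h3 : 3 ≤ (Finset.univ.filter fun i => 1 - φ^2/4 < hM.eigenvalues i).card := hcon
  obtain ⟨T, hTsub, hT3⟩ := Finset.exists_subset_card_eq h3
  obtain ⟨a, b, c', hab, hac, hbc, hT⟩ := Finset.card_eq_three.mp hT3
  have hmemT : ∀ w ∈ T, 1 - φ^2/4 < hM.eigenvalues w := by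
    intro w hw
    exact (Finset.mem_filter.mp (hTsub hw)).2
  set idx : Fin 3 → Fin n := ![a, b, c'] with hidx
  have hbig : ∀ j : Fin 3, 1 - φ^2/4 < hM.eigenvalues (idx j) := by
    intro j
    fin_cases j <;> simp only [hidx, Matrix.cons_val_zero, Matrix.cons_val_one,
      Matrix.head_cons, Matrix.cons_val_two, Matrix.tail_cons] <;>
      refine hmemT _ (by rw [hT]; simp)
  have hinj : Function.Injective idx := by
    intro p q hpq
    fin_cases p <;> fin_cases q <;> simp_all [hidx] <;> tauto
  set V : Fin 3 → Fin n → ℝ :=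
    fun j => fun u => (hM.eigenvectorBasis (idx j) : EuclideanSpace ℝ (Fin n)) u with hV
  have horth : ∀ p q : Fin 3, ∑ u, V p u * V q u = if p = q then 1 else 0 := by
    intro p q
    by_cases hpq : p = q
    · subst hpq
      rw [if_pos rfl]
      have := nsq_eq (toE (V p))
      simp only [toE_apply] at this
      have hne : ‖toE (V p)‖ = 1 := hM.eigenvectorBasis.orthonormal.1 (idx p)
      have h2 : ∑ u, (V p u)^2 = 1 := by rw [← this, hne]; norm_num
      rw [← h2]
      exact Finset.sum_congr rfl fun u _ => by ring
    · rw [if_neg hpq]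
      have hne : idx p ≠ idx q := fun h => hpq (hinj h)
      have horth0 : ⟪(hM.eigenvectorBasis (idx p) : EuclideanSpace ℝ (Fin n)),
          (hM.eigenvectorBasis (idx q) : EuclideanSpace ℝ (Fin n))⟫ = 0 :=
        hM.eigenvectorBasis.orthonormal.2 hne
      rw [inner_sum] at horth0
      exact horth0
  -- find a nonzero kernel element of the 2x3 constraint matrix
  set A : Matrix (Fin 2) (Fin 3) ℝ :=
    Matrix.of ![fun j => ∑ u ∈ C₁, V j u, fun j => ∑ u ∈ C₂, V j u] with hA
  have hnotinj : ¬ Function.Injective A.mulVecLin := by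
    intro hinj'
    have := LinearMap.finrank_le_finrank_of_injective hinj'
    simp only [Module.finrank_pi] at this
    simp at this
  rw [Function.not_injective_iff] at hnotinj
  obtain ⟨c1, c2, hc12, hcne⟩ := hnotinj
  set cc : Fin 3 → ℝ := c1 - c2 with hcc
  have hccne : cc ≠ 0 := sub_ne_zero_of_ne hcne
  have hker : A.mulVec cc = 0 := by
    have : A.mulVecLin cc = A.mulVecLin c1 - A.mulVecLin c2 := by
      rw [hcc, map_sub]
    rw [hc12, sub_self] at this
    exact this
  have hrow : ∀ r : Fin 2, ∑ j : Fin 3, A r j * cc j = 0 := by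
    intro r
    have := congrFun hker r
    rwa [Matrix.mulVec, dotProduct] at this
  set x : Fin n → ℝ := fun u => ∑ j : Fin 3, cc j * V j u with hx
  have hs1 : ∑ u ∈ C₁, x u = 0 := by
    rw [hx]
    simp only []
    rw [Finset.sum_comm]
    have := hrow 0
    simp only [hA, Matrix.of_apply, Matrix.cons_val_zero] at this
    rw [← this]
    exact Finset.sum_congr rfl fun j _ => by rw [← Finset.mul_sum]; ring
  have hs2 : ∑ u ∈ C₂, x u = 0 := by
    rw [hx]
    simp only []
    rw [Finset.sum_comm]
    have := hrow 1
    simp only [hA, Matrix.of_apply, Matrix.cons_val_one, Matrix.head_cons, Matrix.cons_val_zero] at this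
    rw [← this]
    exact Finset.sum_congr rfl fun j _ => by rw [← Finset.mul_sum]; ring
  have hxx : ∑ u, (x u)^2 = ∑ j : Fin 3, (cc j)^2 := by
    have h0 : ∑ u, (x u)^2 = ∑ u : Fin n, (∑ j : Fin 3, cc j * V j u) * (∑ k : Fin 3, cc k * V k u) := by
      exact Finset.sum_congr rfl fun u _ => by rw [hx]; ring
    have hterm : ∀ j k : Fin 3, cc j * cc k * ∑ u, V j u * V k u
        = if k = j then (cc j)^2 else 0 := by
      intro j k
      by_cases h : k = j
      · subst h
        rw [if_pos rfl, horth k k, if_pos rfl]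
        ring
      · rw [if_neg h, horth j k, if_neg (fun hh => h hh.symm)]
        ring
    rw [h0, sum3_prod]
    rw [Finset.sum_congr rfl fun j (_ : j ∈ Finset.univ) => Finset.sum_congr rfl
      fun k (_ : k ∈ Finset.univ) => hterm j k]
    simp
  have hmvx : ∀ u, (lazyWalk G d).mulVec x u = ∑ j : Fin 3, cc j * (hM.eigenvalues (idx j) * V j u) := by
    intro u
    rw [Matrix.mulVec, dotProduct]
    have hswap : ∑ v, lazyWalk G d u v * x v
        = ∑ j : Fin 3, cc j * ∑ v, lazyWalk G d u v * V j v := by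
      rw [Finset.sum_congr rfl fun v (_ : v ∈ Finset.univ) => show
        lazyWalk G d u v * x v = ∑ j : Fin 3, cc j * (lazyWalk G d u v * V j v) from by
          rw [hx]
          simp only []
          rw [Finset.mul_sum]
          exact Finset.sum_congr rfl fun j _ => by ring]
      rw [Finset.sum_comm]
      exact Finset.sum_congr rfl fun j _ => by rw [← Finset.mul_sum]
    rw [hswap]
    refine Finset.sum_congr rfl fun j _ => ?_
    have : ∑ v, lazyWalk G d u v * V j v = (lazyWalk G d).mulVec (V j) u := by
      rw [Matrix.mulVec, dotProduct]
    have h5 : (lazyWalk G d).mulVec (V j) u = hM.eigenvalues (idx j) * V j u :=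
      congrFun (hM.mulVec_eigenvectorBasis (idx j)) u
    rw [this, h5]
  have hxMx : ∑ u, x u * (lazyWalk G d).mulVec x u = ∑ j : Fin 3, (cc j)^2 * hM.eigenvalues (idx j) := by
    rw [Finset.sum_congr rfl fun u (_ : u ∈ Finset.univ) => by rw [hmvx u]]
    have : ∑ u : Fin n, x u * (∑ j : Fin 3, cc j * (hM.eigenvalues (idx j) * V j u))
        = ∑ u : Fin n, (∑ j : Fin 3, cc j * V j u) * (∑ k : Fin 3, (cc k * hM.eigenvalues (idx k)) * V k u) := by
      refine Finset.sum_congr rfl fun u _ => ?_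
      rw [hx]
      simp only []
      congr 1
      exact Finset.sum_congr rfl fun k _ => by ring
    have hterm : ∀ j k : Fin 3, cc j * (cc k * hM.eigenvalues (idx k)) * ∑ u, V j u * V k u
        = if k = j then (cc j)^2 * hM.eigenvalues (idx j) else 0 := by
      intro j k
      by_cases h : k = j
      · subst h
        rw [if_pos rfl, horth k k, if_pos rfl]
        ring
      · rw [if_neg h, horth j k, if_neg (fun hh => h hh.symm)]
        ring
    rw [this, sum3_prod]
    rw [Finset.sum_congr rfl fun j (_ : j ∈ Finset.univ) => Finset.sum_congr rfl
      fun k (_ : k ∈ Finset.univ) => hterm j k]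
    simp
  -- strict inequality
  obtain ⟨j0, hj0⟩ := Function.ne_iff.mp hccne
  have hstrict : (1 - φ^2/4) * ∑ j : Fin 3, (cc j)^2 < ∑ j : Fin 3, (cc j)^2 * hM.eigenvalues (idx j) := by
    rw [Finset.mul_sum]
    refine Finset.sum_lt_sum (fun j _ => ?_) ⟨j0, Finset.mem_univ j0, ?_⟩
    · have := le_of_lt (hbig j)
      have hsq : 0 ≤ (cc j)^2 := sq_nonneg _
      nlinarith
    · have := hbig j0
      have hj0' : cc j0 ≠ 0 := hj0
      have hsq : 0 < (cc j0)^2 := by positivity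
      nlinarith
  have hquad := quad_le_cluster G d hd hmax hφ hdisj hun h1 h2 x hs1 hs2
  rw [hxMx, hxx] at hquad
  linarith

end Aux


theorem stmt6 (d : ℕ) (hd : 1 ≤ d) :
    ∃ c : ℝ, 0 < c ∧ ∀ (γ : ℝ), 0 < γ → γ < 1 → ∀ (φ : ℝ), 0 < φ → φ ≤ 1 →
      ∀ (n : ℕ) (G : SimpleGraph (Fin n)), MaxDegreeLE G d → Clusterable2 G d φ →
        ∃ V' : Finset (Fin n), (1 - γ) * n ≤ V'.card ∧
          ∀ u ∈ V', ∀ t : ℕ, c * Real.log n / φ ^ 2 < t →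
            ‖pvec G d t u‖ ^ 2 ≤ 4 / (γ * n) := by
  refine ⟨2, by norm_num, ?_⟩
  intro γ hγ0 hγ1 φ hφ0 hφ1 n G hmax hclus
  -- extract clusters (possibly with an empty one)
  obtain ⟨C₁, C₂, hdisj, hun, hic1, hic2⟩ :
      ∃ C₁ C₂ : Finset (Fin n), Disjoint C₁ C₂ ∧ C₁ ∪ C₂ = Finset.univ ∧
        InnerConductanceGE G d C₁ φ ∧ InnerConductanceGE G d C₂ φ := by
    rcases hclus with h | ⟨C₁, C₂, _, _, hdisj, hun, h1, h2⟩
    · refine ⟨Finset.univ, ∅, Finset.disjoint_empty_right _, Finset.union_empty _, h, ?_⟩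
      intro S hS hne _
      rw [Finset.subset_empty] at hS
      subst hS
      exact absurd hne (by simp)
    · exact ⟨C₁, C₂, hdisj, hun, h1, h2⟩
  rcases Nat.eq_zero_or_pos n with hn0 | hn1
  · subst hn0
    exact ⟨∅, by simp, fun u hu => absurd hu (Finset.notMem_empty u)⟩
  -- setup
  set M := lazyWalk G d with hMdef
  set hM := Aux.lazyWalk_isHermitian G d with hMh
  have hlam : ∀ i, 0 ≤ hM.eigenvalues i ∧ hM.eigenvalues i ≤ 1 :=
    fun i => Aux.eig_bounds G d hd hmax i
  have hφle : 0 ≤ φ := le_of_lt hφ0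
  have hbad : (Finset.univ.filter fun i => 1 - φ^2/4 < hM.eigenvalues i).card ≤ 2 :=
    Aux.bad_card G d hd hmax hφle hdisj hun hic1 hic2
  set δ : ℝ := φ^2/4 with hδdef
  have hδ0 : 0 ≤ δ := by positivity
  have hδ1 : δ ≤ 1/4 := by
    rw [hδdef]
    nlinarith
  set t₀ : ℕ := ⌊2 * Real.log n / φ^2⌋₊ + 1 with ht₀def
  have hlogn0 : 0 ≤ Real.log n := Real.log_natCast_nonneg n
  have hthr0 : 0 ≤ 2 * Real.log n / φ^2 := div_nonneg (by linarith) (by positivity)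
  have ht₀gt : 2 * Real.log n / φ^2 < t₀ := by
    rw [ht₀def]
    push_cast
    exact Nat.lt_floor_add_one _
  -- trace bound
  have htrace : ∑ i, hM.eigenvalues i ^ (2*t₀) ≤ 2 + n * (1 - δ)^(2*t₀) := by
    rw [← Finset.sum_filter_add_sum_filter_not Finset.univ
      (fun i => 1 - φ^2/4 < hM.eigenvalues i)]
    have hA : ∑ i ∈ Finset.univ.filter (fun i => 1 - φ^2/4 < hM.eigenvalues i),
        hM.eigenvalues i ^ (2*t₀) ≤ 2 := by
      calc ∑ i ∈ Finset.univ.filter (fun i => 1 - φ^2/4 < hM.eigenvalues i),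
            hM.eigenvalues i ^ (2*t₀)
          ≤ ∑ _i ∈ Finset.univ.filter (fun i => 1 - φ^2/4 < hM.eigenvalues i), (1:ℝ) :=
            Finset.sum_le_sum fun i _ => pow_le_one₀ (hlam i).1 (hlam i).2
        _ = (Finset.univ.filter (fun i => 1 - φ^2/4 < hM.eigenvalues i)).card := by simp
        _ ≤ 2 := by exact_mod_cast hbad
    have hB : ∑ i ∈ Finset.univ.filter (fun i => ¬(1 - φ^2/4 < hM.eigenvalues i)),
        hM.eigenvalues i ^ (2*t₀) ≤ n * (1 - δ)^(2*t₀) := by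
      calc ∑ i ∈ Finset.univ.filter (fun i => ¬(1 - φ^2/4 < hM.eigenvalues i)),
            hM.eigenvalues i ^ (2*t₀)
          ≤ ∑ _i ∈ Finset.univ.filter (fun i => ¬(1 - φ^2/4 < hM.eigenvalues i)),
            (1 - δ)^(2*t₀) := by
            refine Finset.sum_le_sum fun i hi => ?_
            have hle : hM.eigenvalues i ≤ 1 - δ := by
              have := (Finset.mem_filter.mp hi).2
              push_neg at this
              rw [hδdef]
              exact this
            exact pow_le_pow_left₀ (hlam i).1 hle _
        _ = ((Finset.univ.filter (fun i => ¬(1 - φ^2/4 < hM.eigenvalues i))).card : ℝ)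
              * (1 - δ)^(2*t₀) := by rw [Finset.sum_const, nsmul_eq_mul]
        _ ≤ n * (1 - δ)^(2*t₀) := by
            refine mul_le_mul_of_nonneg_right ?_ (pow_nonneg (by linarith) _)
            have : (Finset.univ.filter (fun i => ¬(1 - φ^2/4 < hM.eigenvalues i))).card
                ≤ n := le_trans (Finset.card_filter_le _ _) (by simp)
            exact_mod_cast this
    linarith
  have hsmall : (n:ℝ) * (1 - δ)^(2*t₀) ≤ 1 := by
    have hexp : 1 - δ ≤ Real.exp (-δ) := by
      have := Real.add_one_le_exp (-δ)
      linarith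
    have hp1 : (1 - δ)^(2*t₀) ≤ Real.exp (-δ)^(2*t₀) :=
      pow_le_pow_left₀ (by linarith) hexp _
    have hp2 : Real.exp (-δ)^(2*t₀) = Real.exp (-(δ * (2*t₀))) := by
      rw [← Real.exp_nat_mul]
      congr 1
      push_cast
      ring
    have hlog : Real.log n ≤ δ * (2*t₀) := by
      have h1 : 2 * Real.log n / φ^2 * (φ^2/2) = Real.log n := by
        field_simp
      have h2 : 2 * Real.log n / φ^2 * (φ^2/2) ≤ (t₀:ℝ) * (φ^2/2) := by
        refine mul_le_mul_of_nonneg_right (le_of_lt ht₀gt) (by positivity)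
      rw [h1] at h2
      rw [hδdef]
      calc Real.log n ≤ (t₀:ℝ) * (φ^2/2) := h2
        _ = φ^2/4 * (2*t₀) := by ring
    have hp3 : Real.exp (-(δ * (2*t₀))) ≤ Real.exp (-(Real.log n)) := by
      rw [Real.exp_le_exp]
      linarith
    have hp4 : Real.exp (-(Real.log n)) = 1 / n := by
      rw [Real.exp_neg, Real.exp_log (by exact_mod_cast hn1 : (0:ℝ) < n)]
      rw [one_div]
    have hn0' : (0:ℝ) < n := by exact_mod_cast hn1
    calc (n:ℝ) * (1 - δ)^(2*t₀) ≤ (n:ℝ) * (1/n) := by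
          refine mul_le_mul_of_nonneg_left ?_ (le_of_lt hn0')
          calc (1 - δ)^(2*t₀) ≤ Real.exp (-δ)^(2*t₀) := hp1
            _ = Real.exp (-(δ * (2*t₀))) := hp2
            _ ≤ Real.exp (-(Real.log n)) := hp3
            _ = 1/n := hp4
      _ = 1 := by field_simp
  -- sum of walk norms at time t₀
  have hpv : ∀ (t : ℕ) (u : Fin n),
      pvec G d t u = Aux.toE ((M ^ t).mulVec (fun w => if w = u then (1:ℝ) else 0)) :=
    fun t u => rfl
  have htr3 : ∑ u : Fin n, ‖pvec G d t₀ u‖^2 ≤ 3 := by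
    have := Aux.trace_pow M hM t₀
    rw [Finset.sum_congr rfl fun u (_ : u ∈ Finset.univ) => by rw [hpv t₀ u]]
    rw [this]
    linarith [htrace, hsmall]
  -- bad vertices
  have hγn : (0:ℝ) < γ * n := by
    have : (0:ℝ) < n := by exact_mod_cast hn1
    positivity
  set Bv := Finset.univ.filter (fun u => 4/(γ*n) < ‖pvec G d t₀ u‖^2) with hBvdef
  have hBv3 : (Bv.card : ℝ) * (4/(γ*n)) ≤ 3 := by
    calc (Bv.card : ℝ) * (4/(γ*n)) = ∑ _u ∈ Bv, 4/(γ*n) := by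
          rw [Finset.sum_const, nsmul_eq_mul]
      _ ≤ ∑ u ∈ Bv, ‖pvec G d t₀ u‖^2 := by
          refine Finset.sum_le_sum fun u hu => ?_
          exact le_of_lt (Finset.mem_filter.mp hu).2
      _ ≤ ∑ u : Fin n, ‖pvec G d t₀ u‖^2 := by
          refine Finset.sum_le_sum_of_subset_of_nonneg (Finset.subset_univ _)
            fun u _ _ => sq_nonneg _
      _ ≤ 3 := htr3
  have hBvle : (Bv.card : ℝ) ≤ γ * n := by
    have h1 : (Bv.card : ℝ) * (4/(γ*n)) = (Bv.card : ℝ) * 4 / (γ*n) := by ring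
    rw [h1] at hBv3
    have h2 : (Bv.card : ℝ) * 4 ≤ 3 * (γ*n) := (div_le_iff₀ hγn).mp hBv3
    linarith
  refine ⟨Finset.univ \ Bv, ?_, ?_⟩
  · have hcard : (Finset.univ \ Bv).card = n - Bv.card := by
      rw [Finset.card_sdiff_of_subset (Finset.subset_univ Bv)]
      simp
    rw [hcard]
    have hle : Bv.card ≤ n := le_trans (Finset.card_le_univ Bv) (by simp)
    rw [Nat.cast_sub hle]
    have : (1 - γ) * n = n - γ * n := by ring
    rw [this]
    linarith
  · intro u hu t ht
    have hunotin : ¬(4/(γ*n) < ‖pvec G d t₀ u‖^2) := by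
      intro hlt
      have : u ∈ Bv := Finset.mem_filter.mpr ⟨Finset.mem_univ u, hlt⟩
      exact (Finset.mem_sdiff.mp hu).2 this
    push_neg at hunotin
    have ht₀t : t₀ ≤ t := by
      have hfl : ⌊2 * Real.log n / φ^2⌋₊ < t := by
        rw [Nat.floor_lt hthr0]
        exact ht
      omega
    calc ‖pvec G d t u‖^2
        = ‖Aux.toE ((M ^ t).mulVec (fun w => if w = u then (1:ℝ) else 0))‖^2 := by
          rw [hpv t u]
      _ ≤ ‖Aux.toE ((M ^ t₀).mulVec (fun w => if w = u then (1:ℝ) else 0))‖^2 :=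
          Aux.norm_pow_le M hM hlam ht₀t _
      _ = ‖pvec G d t₀ u‖^2 := by rw [hpv t₀ u]
      _ ≤ 4/(γ*n) := hunotin
end

section
/- Let G be a simple graph on n vertices with maximum degree at most d, let δ > 0, and let S₁, S₂ be disjoint nonempty subsets of V with cut conductance φ_G(Sᵢ) < δ for i = 1, 2 and |S₁| + |S₂| ≤ 2n/3. Let Π be the orthogonal projection onto the span of the eigenvectors of the lazy random walk matrix M with eigenvalue greater than 1 − 4δ. Then for every α ∈ [0, 1] and every β ∈ {1 − α, −(1 − α)}, it holds that ‖αΠq_{S₁}⁰ + βΠq_{S₂}⁰‖² ≥ 1/(12(|S₁| + |S₂|)). In particular, for every ε < 1/√(12(|S₁| + |S₂|)), the vectors Πq_{S₁}⁰ and Πq_{S₂}⁰ are ε-far from collinear. -/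
open scoped RealInnerProductSpace

section Aux

open scoped RealInnerProductSpace

variable {n d : ℕ} {G : SimpleGraph (Fin n)}

open scoped Classical in
lemma deg_eq (u : Fin n) :
    ((G.neighborSet u).ncard : ℝ) = ∑ v, if G.Adj u v then (1:ℝ) else 0 := by
  rw [Set.ncard_eq_toFinset_card', Finset.sum_boole]
  norm_cast
  congr 1
  ext v
  simp

open scoped Classical in
lemma mulVec_lazyWalk (x : Fin n → ℝ) (u : Fin n) :
    (lazyWalk G d).mulVec x u
      = x u - (1/(2*d)) * ∑ v, (if G.Adj u v then x u - x v else 0) := by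
  unfold Matrix.mulVec dotProduct lazyWalk
  simp only [Matrix.of_apply]
  have step : ∀ v, (if u = v then 1 - ((G.neighborSet u).ncard : ℝ) / (2 * d)
      else if G.Adj u v then 1 / (2 * d) else 0) * x v
      = (if u = v then (1 - ((G.neighborSet u).ncard : ℝ) / (2 * d)) * x v else 0)
        + (if G.Adj u v then (1/(2*d)) * x v else 0) := by
    intro v
    by_cases h : u = v
    · subst h; simp [G.loopless]
    · simp only [if_neg h]
      split_ifs <;> ring
  rw [Finset.sum_congr rfl fun v _ => step v]
  rw [Finset.sum_add_distrib, Finset.sum_ite_eq (Finset.univ) u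
    (fun v => (1 - ((G.neighborSet u).ncard : ℝ) / (2 * d)) * x v)]
  simp only [Finset.mem_univ, if_pos]
  have h1 : ∑ v, (if G.Adj u v then x u - x v else 0)
      = ((G.neighborSet u).ncard : ℝ) * x u - ∑ v, (if G.Adj u v then x v else 0) := by
    rw [deg_eq, Finset.sum_mul, ← Finset.sum_sub_distrib]
    refine Finset.sum_congr rfl fun v _ => ?_
    split_ifs <;> ring
  have h2 : ∑ v, (if G.Adj u v then (1/(2*d)) * x v else 0)
      = (1/(2*d)) * ∑ v, (if G.Adj u v then x v else 0) := by
    rw [Finset.mul_sum]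
    refine Finset.sum_congr rfl fun v _ => ?_
    split_ifs <;> ring
  rw [h1, h2]
  ring

/-- The quadratic form of `I - M` for the lazy walk. -/
noncomputable def Qform {n : ℕ} (G : SimpleGraph (Fin n)) (d : ℕ)
    (x : EuclideanSpace ℝ (Fin n)) : ℝ :=
  ⟪x, x - Matrix.toEuclideanLin (lazyWalk G d) x⟫

open scoped Classical in
lemma Qform_eq (x : EuclideanSpace ℝ (Fin n)) :
    Qform G d x = (1/(4*d)) * ∑ u, ∑ v, (if G.Adj u v then (x u - x v)^2 else 0) := by
  have happ : ∀ u, (Matrix.toEuclideanLin (lazyWalk G d) x) u = (lazyWalk G d).mulVec x u := by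
    intro u; rw [Matrix.toEuclideanLin_apply]
  have h0 : Qform G d x = ∑ u, x u * (x u - (lazyWalk G d).mulVec x u) := by
    unfold Qform
    simp only [PiLp.inner_apply, RCLike.inner_apply, conj_trivial]
    refine Finset.sum_congr rfl fun u _ => ?_
    rw [show (x - Matrix.toEuclideanLin (lazyWalk G d) x) u
        = x u - (Matrix.toEuclideanLin (lazyWalk G d) x) u from rfl, happ u]
    ring
  rw [h0]
  have h1 : ∀ u, x u * (x u - (lazyWalk G d).mulVec x u)
      = (1/(2*d)) * ∑ v, (if G.Adj u v then x u * (x u - x v) else 0) := by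
    intro u
    rw [mulVec_lazyWalk]
    have e : x u * ∑ v, (if G.Adj u v then x u - x v else 0)
        = ∑ v, (if G.Adj u v then x u * (x u - x v) else 0) := by
      rw [Finset.mul_sum]
      refine Finset.sum_congr rfl fun v _ => ?_
      split_ifs <;> ring
    rw [← e]
    ring
  rw [Finset.sum_congr rfl fun u _ => h1 u, ← Finset.mul_sum]
  have hsymm : ∑ u, ∑ v, (if G.Adj u v then x u * (x u - x v) else 0)
      = ∑ u, ∑ v, (if G.Adj u v then x v * (x v - x u) else 0) := by
    rw [Finset.sum_comm]
    refine Finset.sum_congr rfl fun u _ => Finset.sum_congr rfl fun v _ => ?_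
    simp only [G.adj_comm u v]
  have key : (2:ℝ) * ∑ u, ∑ v, (if G.Adj u v then x u * (x u - x v) else 0)
      = ∑ u, ∑ v, (if G.Adj u v then (x u - x v)^2 else 0) := by
    rw [two_mul]
    nth_rewrite 2 [hsymm]
    rw [← Finset.sum_add_distrib]
    refine Finset.sum_congr rfl fun u _ => ?_
    rw [← Finset.sum_add_distrib]
    refine Finset.sum_congr rfl fun v _ => ?_
    split_ifs <;> ring
  rw [← key]
  ring

lemma Qform_nonneg (x : EuclideanSpace ℝ (Fin n)) : 0 ≤ Qform G d x := by
  classical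
  rw [Qform_eq]
  have : (0:ℝ) ≤ ∑ u, ∑ v, (if G.Adj u v then (x u - x v)^2 else 0) := by
    refine Finset.sum_nonneg fun u _ => Finset.sum_nonneg fun v _ => ?_
    split_ifs <;> positivity
  positivity

open scoped Classical in
lemma qavg_apply (S : Finset (Fin n)) (v : Fin n) :
    qavg S v = (if v ∈ S then (S.card : ℝ)⁻¹ else 0) - (S.card : ℝ)⁻¹ * S.card / n := by
  unfold qavg qzero
  have : (∑ u ∈ S, (WithLp.toLp 2 fun w => ((if w = u then (1:ℝ) else 0) - 1 / n) : EuclideanSpace ℝ (Fin n))) v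
      = ∑ u ∈ S, ((if v = u then (1:ℝ) else 0) - 1 / n) := by
    rw [WithLp.ofLp_sum, Finset.sum_apply]
  show (S.card : ℝ)⁻¹ * (∑ u ∈ S, (WithLp.toLp 2 fun w => ((if w = u then (1:ℝ) else 0) - 1 / n) : EuclideanSpace ℝ (Fin n))) v = _
  rw [this, Finset.sum_sub_distrib, Finset.sum_ite_eq S v (fun _ => (1:ℝ))]
  simp only [Finset.sum_const, nsmul_eq_mul, mul_one]
  split_ifs <;> ring

open scoped Classical in
lemma sum_ind (S : Finset (Fin n)) (c : ℝ) :
    ∑ v, (if v ∈ S then c else 0) = S.card * c := by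
  rw [Finset.sum_ite_mem, Finset.univ_inter, Finset.sum_const, nsmul_eq_mul]

open scoped Classical in
lemma inner_qavg (S T : Finset (Fin n)) (hS : S.Nonempty) (hT : T.Nonempty) (hn : 0 < n) :
    ⟪qavg S, qavg T⟫ = (∑ v, (if v ∈ S then (S.card : ℝ)⁻¹ else 0)
      * (if v ∈ T then (T.card : ℝ)⁻¹ else 0)) - 1/n := by
  have hs : (S.card : ℝ) ≠ 0 := Nat.cast_ne_zero.mpr (Finset.card_ne_zero.mpr hS)
  have ht : (T.card : ℝ) ≠ 0 := Nat.cast_ne_zero.mpr (Finset.card_ne_zero.mpr hT)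
  have hn' : (n:ℝ) ≠ 0 := Nat.cast_ne_zero.mpr hn.ne'
  simp only [PiLp.inner_apply, RCLike.inner_apply, conj_trivial]
  have step : ∀ v, qavg S v * qavg T v
      = (if v ∈ S then (S.card : ℝ)⁻¹ else 0) * (if v ∈ T then (T.card : ℝ)⁻¹ else 0)
        - (1/n) * (if v ∈ S then (S.card : ℝ)⁻¹ else 0)
        - (1/n) * (if v ∈ T then (T.card : ℝ)⁻¹ else 0) + 1/n^2 := by
    intro v
    rw [qavg_apply, qavg_apply]
    rw [inv_mul_cancel₀ hs, inv_mul_cancel₀ ht]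
    ring
  rw [Finset.sum_congr rfl fun v _ => mul_comm (qavg T v) (qavg S v)]
  rw [Finset.sum_congr rfl fun v _ => step v]
  rw [Finset.sum_add_distrib, Finset.sum_sub_distrib, Finset.sum_sub_distrib,
    ← Finset.mul_sum, ← Finset.mul_sum, sum_ind, sum_ind,
    mul_inv_cancel₀ hs, mul_inv_cancel₀ ht]
  simp only [Finset.sum_const, Finset.card_univ, Fintype.card_fin, nsmul_eq_mul]
  field_simp
  ring

open scoped Classical in
lemma norm_sq_qavg (S : Finset (Fin n)) (hS : S.Nonempty) (hn : 0 < n) :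
    ‖qavg S‖^2 = (S.card : ℝ)⁻¹ - 1/n := by
  have hs : (S.card : ℝ) ≠ 0 := Nat.cast_ne_zero.mpr (Finset.card_ne_zero.mpr hS)
  rw [← real_inner_self_eq_norm_sq, inner_qavg S S hS hS hn]
  have : ∀ v : Fin n, (if v ∈ S then (S.card : ℝ)⁻¹ else 0) * (if v ∈ S then (S.card : ℝ)⁻¹ else 0)
      = if v ∈ S then (S.card : ℝ)⁻¹ * (S.card : ℝ)⁻¹ else 0 := fun v => by split_ifs <;> ring
  rw [Finset.sum_congr rfl fun v _ => this v, sum_ind]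
  field_simp

open scoped Classical in
lemma inner_qavg_disjoint (S T : Finset (Fin n)) (hS : S.Nonempty) (hT : T.Nonempty)
    (hn : 0 < n) (hdisj : Disjoint S T) :
    ⟪qavg S, qavg T⟫ = - (1/n) := by
  rw [inner_qavg S T hS hT hn]
  have : ∀ v : Fin n, (if v ∈ S then (S.card : ℝ)⁻¹ else 0)
      * (if v ∈ T then (T.card : ℝ)⁻¹ else 0) = 0 := by
    intro v
    by_cases h : v ∈ S
    · rw [if_neg (Finset.disjoint_left.mp hdisj h)]; ring
    · rw [if_neg h]; ring
  rw [Finset.sum_congr rfl fun v _ => this v]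
  simp

open scoped Classical in
lemma cutEdges_eq (S : Finset (Fin n)) :
    (cutEdges G S : ℝ)
      = ∑ u, ∑ v, (if u ∈ S ∧ v ∉ S ∧ G.Adj u v then (1:ℝ) else 0) := by
  unfold cutEdges cutEdgesIn
  have hset : {p : Fin n × Fin n | p.1 ∈ S ∧ p.2 ∈ Finset.univ ∧ p.2 ∉ S ∧ G.Adj p.1 p.2}
      = ↑(Finset.univ.filter fun p : Fin n × Fin n => p.1 ∈ S ∧ p.2 ∉ S ∧ G.Adj p.1 p.2) := by
    ext p; simp
  rw [hset, Set.ncard_coe_finset]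
  rw [Finset.card_filter]
  push_cast
  rw [Fintype.sum_prod_type]

open scoped Classical in
lemma Qform_qavg (hd : d ≠ 0) (S : Finset (Fin n)) (hS : S.Nonempty) :
    Qform G d (qavg S) = (cutEdges G S : ℝ) / (2*d*S.card^2) := by
  have hs : (S.card:ℝ) ≠ 0 := Nat.cast_ne_zero.mpr (Finset.card_ne_zero.mpr hS)
  have hd' : (d:ℝ) ≠ 0 := Nat.cast_ne_zero.mpr hd
  rw [Qform_eq]
  have key : ∀ u v : Fin n, (if G.Adj u v then (qavg S u - qavg S v)^2 else 0)
      = ((S.card:ℝ)⁻¹)^2 * ((if u ∈ S ∧ v ∉ S ∧ G.Adj u v then (1:ℝ) else 0)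
          + (if v ∈ S ∧ u ∉ S ∧ G.Adj u v then (1:ℝ) else 0)) := by
    intro u v
    rw [qavg_apply, qavg_apply]
    by_cases hadj : G.Adj u v
    · by_cases hu : u ∈ S <;> by_cases hv : v ∈ S <;> simp [hadj, hu, hv] <;> ring
    · simp [hadj]
  rw [Finset.sum_congr rfl fun u _ => Finset.sum_congr rfl fun v _ => key u v]
  have hsplit : ∑ u, ∑ v, (((S.card:ℝ)⁻¹)^2 * ((if u ∈ S ∧ v ∉ S ∧ G.Adj u v then (1:ℝ) else 0)
        + (if v ∈ S ∧ u ∉ S ∧ G.Adj u v then (1:ℝ) else 0)))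
      = ((S.card:ℝ)⁻¹)^2 * ((∑ u, ∑ v, (if u ∈ S ∧ v ∉ S ∧ G.Adj u v then (1:ℝ) else 0))
        + ∑ u, ∑ v, (if v ∈ S ∧ u ∉ S ∧ G.Adj u v then (1:ℝ) else 0)) := by
    rw [mul_add, Finset.mul_sum, Finset.mul_sum, ← Finset.sum_add_distrib]
    refine Finset.sum_congr rfl fun u _ => ?_
    rw [Finset.mul_sum, Finset.mul_sum, ← Finset.sum_add_distrib]
    refine Finset.sum_congr rfl fun v _ => ?_
    ring
  rw [hsplit]
  have hswap : ∑ u, ∑ v, (if v ∈ S ∧ u ∉ S ∧ G.Adj u v then (1:ℝ) else 0)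
      = ∑ u, ∑ v, (if u ∈ S ∧ v ∉ S ∧ G.Adj u v then (1:ℝ) else 0) := by
    rw [Finset.sum_comm]
    refine Finset.sum_congr rfl fun u _ => Finset.sum_congr rfl fun v _ => ?_
    simp only [G.adj_comm u v]
  rw [hswap, ← cutEdges_eq]
  field_simp
  ring

lemma lazyWalk_isSymmetric : (Matrix.toEuclideanLin (lazyWalk G d)).IsSymmetric := by
  classical
  rw [← Matrix.isHermitian_iff_isSymmetric]
  ext u v
  simp only [Matrix.conjTranspose_apply, lazyWalk, Matrix.of_apply, star_trivial]
  by_cases h : u = v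
  · subst h; rfl
  · rw [if_neg h, if_neg (Ne.symm h), G.adj_comm]

lemma heavySpace_inv (M : Matrix (Fin n) (Fin n) ℝ) (c : ℝ) :
    heavySpace M c ≤ (heavySpace M c).comap (Matrix.toEuclideanLin M) := by
  refine iSup_le fun μ => ?_
  intro x hx
  simp only [Submodule.mem_comap]
  rw [Module.End.mem_eigenspace_iff.mp hx]
  exact Submodule.smul_mem _ _ (Submodule.mem_iSup_of_mem μ hx)

lemma light_bound (M : Matrix (Fin n) (Fin n) ℝ) (c : ℝ)
    (hsym : (Matrix.toEuclideanLin M).IsSymmetric)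
    (x : EuclideanSpace ℝ (Fin n)) (hx : x ∈ (heavySpace M c)ᗮ) :
    (1 - c) * ‖x‖^2 ≤ ⟪x, x - Matrix.toEuclideanLin M x⟫ := by
  set T := Matrix.toEuclideanLin M with hT
  have hn : Module.finrank ℝ (EuclideanSpace ℝ (Fin n)) = n := finrank_euclideanSpace_fin
  set b := hsym.eigenvectorBasis hn with hbdef
  set μ := hsym.eigenvalues hn with hμdef
  have hb : ∀ i, T (b i) = μ i • b i := fun i => hsym.apply_eigenvectorBasis hn i
  set cf : Fin n → ℝ := fun i => ⟪b i, x⟫ with hcf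
  have hxe : x = ∑ i, cf i • b i := by
    rw [hcf]; exact (b.sum_repr' x).symm
  have hTx : T x = ∑ i, (cf i * μ i) • b i := by
    conv_lhs => rw [hxe]
    rw [map_sum]
    refine Finset.sum_congr rfl fun i _ => ?_
    rw [map_smul, hb i, smul_smul]
  have hzero : ∀ i, c < μ i → cf i = 0 := by
    intro i hi
    have hmem : b i ∈ heavySpace M c :=
      Submodule.mem_iSup_of_mem ⟨μ i, hi⟩ (hsym.hasEigenvector_eigenvectorBasis hn i).1
    exact (Submodule.mem_orthogonal _ x).mp hx _ hmem
  have hsub : x - T x = ∑ i, (cf i * (1 - μ i)) • b i := by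
    rw [hTx]
    nth_rewrite 1 [hxe]
    rw [← Finset.sum_sub_distrib]
    refine Finset.sum_congr rfl fun i _ => ?_
    rw [← sub_smul]
    congr 1
    ring
  have hinner : ⟪x, x - T x⟫ = ∑ i, cf i * (cf i * (1 - μ i)) := by
    rw [hsub]
    nth_rewrite 1 [hxe]
    rw [b.orthonormal.inner_sum]
    simp
  have hns : ‖x‖^2 = ∑ i, cf i * cf i := by
    rw [← real_inner_self_eq_norm_sq]
    conv_lhs => rw [hxe]
    rw [b.orthonormal.inner_sum]
    simp
  rw [hinner, hns, Finset.mul_sum]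
  apply Finset.sum_le_sum
  intro i _
  by_cases hi : c < μ i
  · rw [hzero i hi]
    simp
  · push_neg at hi
    nlinarith [sq_nonneg (cf i)]

lemma Qform_proj_le (c : ℝ) (v : EuclideanSpace ℝ (Fin n)) :
    Qform G d (v - heavyProj (lazyWalk G d) c v) ≤ Qform G d v := by
  have hsym : (Matrix.toEuclideanLin (lazyWalk G d)).IsSymmetric := lazyWalk_isSymmetric
  set M := lazyWalk G d with hM
  set T := Matrix.toEuclideanLin M with hT
  set K := heavySpace M c with hK
  set p : EuclideanSpace ℝ (Fin n) := (K.orthogonalProjection v : EuclideanSpace ℝ (Fin n))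
    with hp
  have hpK : p ∈ K := (K.orthogonalProjection v).2
  set r : EuclideanSpace ℝ (Fin n) := v - p with hr
  have hrK : r ∈ Kᗮ := Submodule.sub_starProjection_mem_orthogonal (K := K) v
  have hTp : T p ∈ K := heavySpace_inv M c hpK
  have hv : v = p + r := by rw [hr]; abel
  have hpr : ⟪p, r⟫ = 0 := Submodule.inner_right_of_mem_orthogonal hpK hrK
  have hrp : ⟪r, p⟫ = 0 := Submodule.inner_left_of_mem_orthogonal hpK hrK
  have hpTr : ⟪p, T r⟫ = 0 := by
    rw [← hsym p r]
    exact Submodule.inner_right_of_mem_orthogonal hTp hrK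
  have hrTp : ⟪r, T p⟫ = 0 := Submodule.inner_left_of_mem_orthogonal hTp hrK
  have habstract : ∀ a b : EuclideanSpace ℝ (Fin n), ⟪a,b⟫ = 0 → ⟪b,a⟫ = 0 →
      ⟪a, T b⟫ = 0 → ⟪b, T a⟫ = 0 →
      ⟪a + b, (a + b) - T (a + b)⟫ = ⟪a, a - T a⟫ + ⟪b, b - T b⟫ := by
    intro a b h1 h2 h3 h4
    rw [map_add, show a + b - (T a + T b) = (a - T a) + (b - T b) by abel,
      inner_add_left, inner_add_right, inner_add_right, inner_sub_right, inner_sub_right,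
      inner_sub_right, inner_sub_right, h1, h2, h3, h4]
    ring
  have hsplit : Qform G d v = Qform G d p + Qform G d r := by
    have h1 : Qform G d v = ⟪p + r, (p + r) - T (p + r)⟫ := by
      unfold Qform
      rw [← hM, ← hT, ← hv]
    rw [h1, habstract p r hpr hrp hpTr hrTp]
    rfl
  have hproj : v - heavyProj M c v = r := rfl
  rw [hproj, hsplit]
  have := Qform_nonneg (G := G) (d := d) p
  linarith


lemma resid_arith (y x1 x2 α s1 s2 : ℝ) (hy : 0 ≤ y) (h : y ≤ α*x1 + (1-α)*x2)
    (h1 : x1^2 ≤ 1/(8*s1)) (h2 : x2^2 ≤ 1/(8*s2)) :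
    y^2 ≤ α^2/(4*s1) + (1-α)^2/(4*s2) := by
  have hsq : y^2 ≤ (α*x1 + (1-α)*x2)^2 := by nlinarith
  have h3 : α^2*x1^2 ≤ α^2*(1/(8*s1)) := mul_le_mul_of_nonneg_left h1 (sq_nonneg α)
  have h4 : (1-α)^2*x2^2 ≤ (1-α)^2*(1/(8*s2)) := mul_le_mul_of_nonneg_left h2 (sq_nonneg (1-α))
  calc y^2 ≤ (α*x1 + (1-α)*x2)^2 := hsq
    _ ≤ 2*(α^2*x1^2) + 2*((1-α)^2*x2^2) := by nlinarith [sq_nonneg (α*x1 - (1-α)*x2)]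
    _ ≤ 2*(α^2*(1/(8*s1))) + 2*((1-α)^2*(1/(8*s2))) := by linarith
    _ = α^2/(4*s1) + (1-α)^2/(4*s2) := by ring

lemma absum_sq_le (α β : ℝ) (h0 : 0 ≤ α) (h1 : α ≤ 1) (hor : β = 1 - α ∨ β = -(1-α)) :
    (α+β)^2 ≤ 1 := by
  rcases hor with h | h <;> rw [h] <;> nlinarith

lemma final_arith (s1 s2 nR α β Pw2 w2 r2 : ℝ) (hs1p : 0 < s1) (hs2p : 0 < s2) (hn : 0 < nR)
    (hsize : s1 + s2 ≤ 2*nR/3) (hab1 : (α+β)^2 ≤ 1)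
    (hw2 : w2 = α^2/s1 + (1-α)^2/s2 - (α+β)^2/nR)
    (hrb : r2 ≤ α^2/(4*s1) + (1-α)^2/(4*s2))
    (hPyth : w2 = Pw2 + r2) :
    1/(12*(s1+s2)) ≤ Pw2 := by
  have hKa : 1/(s1+s2) ≤ α^2/s1 + (1-α)^2/s2 := by
    rw [div_add_div _ _ (ne_of_gt hs1p) (ne_of_gt hs2p),
      div_le_div_iff₀ (by positivity) (by positivity)]
    nlinarith [sq_nonneg (α*s2 - (1-α)*s1)]
  have hn2 : 1/nR ≤ 2/(3*(s1+s2)) := by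
    rw [div_le_div_iff₀ hn (by positivity)]
    linarith
  have hcross : (α+β)^2/nR ≤ 2/(3*(s1+s2)) := by
    calc (α+β)^2/nR ≤ 1/nR := (div_le_div_iff_of_pos_right hn).mpr hab1
      _ ≤ 2/(3*(s1+s2)) := hn2
  have ht0 : s1 + s2 ≠ 0 := by positivity
  calc 1/(12*(s1+s2)) = (3/4)*(1/(s1+s2)) - 2/(3*(s1+s2)) := by field_simp; ring
    _ ≤ (3/4)*(α^2/s1+(1-α)^2/s2) - (α+β)^2/nR := by linarith
    _ = (α^2/s1 + (1-α)^2/s2 - (α+β)^2/nR) - (α^2/(4*s1) + (1-α)^2/(4*s2)) := by ring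
    _ ≤ w2 - r2 := by rw [hw2]; linarith
    _ = Pw2 := by rw [hPyth]; ring



lemma exists_alpha_beta (s s' : ℝ) :
    ∃ α β : ℝ, 0 ≤ α ∧ α ≤ 1 ∧ (β = 1 - α ∨ β = -(1-α)) ∧ |β| ≤ 1 - α ∧ α*s + β*s' = 0 := by
  by_cases ht : |s| + |s'| = 0
  · have hs0 : s = 0 := abs_eq_zero.mp (by
      have := abs_nonneg s; have := abs_nonneg s'; linarith)
    exact ⟨1, 0, by norm_num, by norm_num, Or.inl (by norm_num), by norm_num,
      by rw [hs0]; ring⟩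
  · have htp : 0 < |s| + |s'| :=
      lt_of_le_of_ne (by positivity) (Ne.symm ht)
    have hαle : |s'|/(|s| + |s'|) ≤ 1 := by
      rw [div_le_one htp]; linarith [abs_nonneg s]
    have h1α : 1 - |s'|/(|s| + |s'|) = |s|/(|s| + |s'|) := by
      field_simp
      ring
    by_cases hss : 0 ≤ s*s'
    · have hkey : |s'| * s = |s| * s' := by
        rcases le_or_gt 0 s with hsa | hsa <;> rcases le_or_gt 0 s' with hsb | hsb
        · rw [abs_of_nonneg hsa, abs_of_nonneg hsb]; ring
        · have h0 : s = 0 := by nlinarith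
          rw [h0]; simp
        · have h0 : s' = 0 := by nlinarith
          rw [h0]; simp
        · rw [abs_of_neg hsa, abs_of_neg hsb]; ring
      refine ⟨|s'|/(|s| + |s'|), -(1 - |s'|/(|s| + |s'|)), by positivity, hαle,
        Or.inr rfl, ?_, ?_⟩
      · rw [abs_neg, abs_of_nonneg (by linarith)]
      · rw [h1α]
        field_simp
        linear_combination hkey
    · push_neg at hss
      have hkey : |s'| * s + |s| * s' = 0 := by
        rcases le_or_gt 0 s with hsa | hsa
        · have hsb : s' < 0 := by nlinarith
          rw [abs_of_nonneg hsa, abs_of_neg hsb]; ring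
        · have hsb : 0 < s' := by nlinarith
          rw [abs_of_neg hsa, abs_of_nonneg hsb.le]; ring
      refine ⟨|s'|/(|s| + |s'|), 1 - |s'|/(|s| + |s'|), by positivity, hαle,
        Or.inl rfl, ?_, ?_⟩
      · rw [abs_of_nonneg (by linarith)]
      · rw [h1α]
        field_simp
        linear_combination hkey


end Aux

theorem stmt12 {n d : ℕ} (hd : 1 ≤ d) (G : SimpleGraph (Fin n)) (hdeg : MaxDegreeLE G d)
    (δ : ℝ) (hδ : 0 < δ) (S₁ S₂ : Finset (Fin n)) (h1 : S₁.Nonempty) (h2 : S₂.Nonempty)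
    (hdisj : Disjoint S₁ S₂)
    (hc1 : cutCond G d S₁ < δ) (hc2 : cutCond G d S₂ < δ)
    (hsize : (S₁.card + S₂.card : ℝ) ≤ 2 * n / 3) :
    (∀ α β : ℝ, 0 ≤ α → α ≤ 1 → (β = 1 - α ∨ β = -(1 - α)) →
      1 / (12 * (S₁.card + S₂.card)) ≤
        ‖α • heavyProj (lazyWalk G d) (1 - 4 * δ) (qavg S₁) +
          β • heavyProj (lazyWalk G d) (1 - 4 * δ) (qavg S₂)‖ ^ 2) ∧
    (∀ ε : ℝ, ε < 1 / Real.sqrt (12 * (S₁.card + S₂.card)) →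
      ¬ CloseCollinear ε (heavyProj (lazyWalk G d) (1 - 4 * δ) (qavg S₁))
        (heavyProj (lazyWalk G d) (1 - 4 * δ) (qavg S₂))) := by
  classical
  have hn : 0 < n := by obtain ⟨u, _⟩ := h1; exact u.pos
  have hn' : (0:ℝ) < n := Nat.cast_pos.mpr hn
  have hd0 : d ≠ 0 := Nat.one_le_iff_ne_zero.mp hd
  have hdR : (0:ℝ) < d := Nat.cast_pos.mpr (Nat.pos_of_ne_zero hd0)
  set M := lazyWalk G d with hM
  set c : ℝ := 1 - 4 * δ with hc
  have hsym : (Matrix.toEuclideanLin M).IsSymmetric := lazyWalk_isSymmetric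
  set s1 : ℝ := (S₁.card : ℝ) with hs1
  set s2 : ℝ := (S₂.card : ℝ) with hs2
  have hs1p : 0 < s1 := by rw [hs1]; exact_mod_cast Finset.card_pos.mpr h1
  have hs2p : 0 < s2 := by rw [hs2]; exact_mod_cast Finset.card_pos.mpr h2
  -- residual bound
  have hres : ∀ S : Finset (Fin n), S.Nonempty → cutCond G d S < δ →
      ‖qavg S - heavyProj M c (qavg S)‖^2 ≤ 1/(8*(S.card:ℝ)) := by
    intro S hS hcond
    have hsp : (0:ℝ) < S.card := by exact_mod_cast Finset.card_pos.mpr hS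
    have hQle : Qform G d (qavg S) ≤ δ/(2*(S.card:ℝ)) := by
      rw [Qform_qavg hd0 S hS]
      have hcut : (cutEdges G S : ℝ) < δ * ((d:ℝ) * S.card) := by
        have h := hcond
        unfold cutCond at h
        rwa [div_lt_iff₀ (by positivity)] at h
      rw [div_le_div_iff₀ (by positivity) (by positivity)]
      nlinarith [hcut, hsp, hdR]
    set r := qavg S - heavyProj M c (qavg S) with hr
    have hrK : r ∈ (heavySpace M c)ᗮ := Submodule.sub_starProjection_mem_orthogonal (K := heavySpace M c) _
    have h1b : (1 - c)*‖r‖^2 ≤ ⟪r, r - Matrix.toEuclideanLin M r⟫ :=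
      light_bound M c hsym r hrK
    have h2b : Qform G d r ≤ Qform G d (qavg S) := Qform_proj_le c (qavg S)
    have h3b : ⟪r, r - Matrix.toEuclideanLin M r⟫ = Qform G d r := rfl
    have h4 : 4*δ*‖r‖^2 ≤ δ/(2*(S.card:ℝ)) := by
      have hcc : (1 - c) = 4*δ := by rw [hc]; ring
      rw [hcc] at h1b
      rw [h3b] at h1b
      linarith
    have h5 : 4*δ*‖r‖^2 * (2*(S.card:ℝ)) ≤ δ := (le_div_iff₀ (by positivity)).mp h4
    rw [le_div_iff₀ (by positivity)]
    have h6 : δ * (‖r‖^2 * (8*(S.card:ℝ))) ≤ δ * 1 := by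
      calc δ * (‖r‖^2 * (8*(S.card:ℝ))) = 4*δ*‖r‖^2 * (2*(S.card:ℝ)) := by ring
        _ ≤ δ := h5
        _ = δ * 1 := by ring
    exact le_of_mul_le_mul_left h6 hδ
  have hPmem : ∀ x : EuclideanSpace ℝ (Fin n), heavyProj M c x ∈ heavySpace M c :=
    fun x => ((heavySpace M c).orthogonalProjection x).2
  have hpart1 : ∀ α β : ℝ, 0 ≤ α → α ≤ 1 → (β = 1 - α ∨ β = -(1 - α)) →
      1 / (12 * (s1 + s2)) ≤
        ‖α • heavyProj M c (qavg S₁) + β • heavyProj M c (qavg S₂)‖ ^ 2 := by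
    intro α β hα0 hα1 hβor
    have hβ2 : β^2 = (1-α)^2 := by rcases hβor with h|h <;> rw [h] <;> ring
    have hβabs : |β| = 1 - α := by
      rcases hβor with h|h
      · rw [h]; exact abs_of_nonneg (by linarith)
      · rw [h, abs_neg]; exact abs_of_nonneg (by linarith)
    have hαabs : |α| = α := abs_of_nonneg hα0
    have hPlin : α • heavyProj M c (qavg S₁) + β • heavyProj M c (qavg S₂)
        = heavyProj M c (α • qavg S₁ + β • qavg S₂) := by
      simp only [heavyProj, map_add, map_smul, Submodule.coe_add, Submodule.coe_smul]
    rw [hPlin]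
    set w : EuclideanSpace ℝ (Fin n) := α • qavg S₁ + β • qavg S₂ with hw
    have horth : ⟪heavyProj M c w, w - heavyProj M c w⟫ = 0 :=
      Submodule.inner_right_of_mem_orthogonal (hPmem w)
        (Submodule.sub_starProjection_mem_orthogonal (K := heavySpace M c) w)
    have hPyth : ‖w‖^2 = ‖heavyProj M c w‖^2 + ‖w - heavyProj M c w‖^2 := by
      have hw_eq : w = heavyProj M c w + (w - heavyProj M c w) := by abel
      conv_lhs => rw [hw_eq]
      rw [norm_add_sq_real, horth]
      ring
    have hwr : w - heavyProj M c w
        = α • (qavg S₁ - heavyProj M c (qavg S₁)) + β • (qavg S₂ - heavyProj M c (qavg S₂)) := by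
      rw [smul_sub, smul_sub, hw, ← hPlin]
      abel
    have hr1 : ‖qavg S₁ - heavyProj M c (qavg S₁)‖^2 ≤ 1/(8*s1) := hres S₁ h1 hc1
    have hr2 : ‖qavg S₂ - heavyProj M c (qavg S₂)‖^2 ≤ 1/(8*s2) := hres S₂ h2 hc2
    have hrb : ‖w - heavyProj M c w‖^2 ≤ α^2/(4*s1) + (1-α)^2/(4*s2) := by
      have htri : ‖w - heavyProj M c w‖
          ≤ α*‖qavg S₁ - heavyProj M c (qavg S₁)‖ + (1-α)*‖qavg S₂ - heavyProj M c (qavg S₂)‖ := by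
        rw [hwr]
        calc ‖α • (qavg S₁ - heavyProj M c (qavg S₁)) + β • (qavg S₂ - heavyProj M c (qavg S₂))‖
            ≤ ‖α • (qavg S₁ - heavyProj M c (qavg S₁))‖
              + ‖β • (qavg S₂ - heavyProj M c (qavg S₂))‖ := norm_add_le _ _
          _ = α*‖qavg S₁ - heavyProj M c (qavg S₁)‖
              + (1-α)*‖qavg S₂ - heavyProj M c (qavg S₂)‖ := by
              rw [norm_smul, norm_smul, Real.norm_eq_abs, Real.norm_eq_abs, hαabs, hβabs]
      exact resid_arith _ _ _ α s1 s2 (norm_nonneg _) htri hr1 hr2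
    have hw2 : ‖w‖^2 = α^2/s1 + (1-α)^2/s2 - (α+β)^2/n := by
      rw [hw, norm_add_sq_real, norm_smul, norm_smul, Real.norm_eq_abs, Real.norm_eq_abs,
        hαabs, hβabs, mul_pow, mul_pow, norm_sq_qavg S₁ h1 hn, norm_sq_qavg S₂ h2 hn,
        real_inner_smul_left, real_inner_smul_right,
        inner_qavg_disjoint S₁ S₂ h1 h2 hn hdisj]
      rw [← hs1, ← hs2]
      linear_combination (1/(n:ℝ)) * hβ2
    have hab1 : (α+β)^2 ≤ 1 := absum_sq_le α β hα0 hα1 hβor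
    exact final_arith s1 s2 (n:ℝ) α β _ _ _ hs1p hs2p hn' hsize hab1 hw2 hrb hPyth
  refine ⟨hpart1, ?_⟩
  intro ε hε hclose
  obtain ⟨ea, eb, w0, s, s', hea, heb, ha, hb⟩ := hclose
  have hε0 : 0 ≤ ε := le_trans (norm_nonneg ea) hea
  have hT0 : (0:ℝ) < 12*(s1+s2) := by positivity
  have hεsq : ε^2 < 1/(12*(s1+s2)) := by
    calc ε^2 < (1/Real.sqrt (12*(s1+s2)))^2 :=
          pow_lt_pow_left₀ hε hε0 (by norm_num)
      _ = 1/(12*(s1+s2)) := by rw [div_pow, one_pow, Real.sq_sqrt hT0.le]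
  obtain ⟨α, β, hα0, hα1, hβor, habs, hcomb⟩ := exists_alpha_beta s s'
  have hcombo : α • heavyProj M c (qavg S₁) + β • heavyProj M c (qavg S₂)
      = -(α • ea + β • eb) := by
    have h3 : α • heavyProj M c (qavg S₁) + β • heavyProj M c (qavg S₂)
        + (α • ea + β • eb) = (α*s + β*s') • w0 := by
      calc α • heavyProj M c (qavg S₁) + β • heavyProj M c (qavg S₂) + (α • ea + β • eb)
          = α • (heavyProj M c (qavg S₁) + ea) + β • (heavyProj M c (qavg S₂) + eb) := by
            rw [smul_add, smul_add]; abel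
        _ = α • (s • w0) + β • (s' • w0) := by rw [ha, hb]
        _ = (α*s + β*s') • w0 := by rw [smul_smul, smul_smul, add_smul]
    rw [hcomb, zero_smul] at h3
    exact eq_neg_of_add_eq_zero_left h3
  have hnb : ‖α • heavyProj M c (qavg S₁) + β • heavyProj M c (qavg S₂)‖ ≤ ε := by
    rw [hcombo, norm_neg]
    calc ‖α • ea + β • eb‖ ≤ ‖α • ea‖ + ‖β • eb‖ := norm_add_le _ _
      _ = |α| * ‖ea‖ + |β| * ‖eb‖ := by
          rw [norm_smul, norm_smul, Real.norm_eq_abs, Real.norm_eq_abs]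
      _ ≤ α*ε + (1-α)*ε := by
          rw [abs_of_nonneg hα0]
          exact add_le_add (mul_le_mul le_rfl hea (norm_nonneg ea) hα0)
            (mul_le_mul habs heb (norm_nonneg eb) (by linarith))
      _ = ε := by ring
  have hfin := hpart1 α β hα0 hα1 hβor
  have hsq : ‖α • heavyProj M c (qavg S₁) + β • heavyProj M c (qavg S₂)‖^2 ≤ ε^2 :=
    pow_le_pow_left₀ (norm_nonneg _) hnb 2
  exact lt_irrefl _ (lt_of_le_of_lt (hfin.trans hsq) hεsq)
end

section
/- Let G be a simple graph on n vertices with maximum degree at most d, let 0 < δ ≤ 1/4, and let Π be the orthogonal projection onto the span of the eigenvectors of the lazy random walk matrix M with eigenvalue greater than 1 − 4δ. Then for all vertices u, v, all reals α, β, and all integers t ≥ 0: ‖αq_u^t + βq_v^t‖ ≥ (1 − 4δ)^t·‖αΠq_u⁰ + βΠq_v⁰‖. Consequently, for every ε > 0, if Πq_u⁰ and Πq_v⁰ are ε-far from antipodal then q_u^t and q_v^t are (1 − 4δ)^t·ε-far from antipodal, and if Πq_u⁰ and Πq_v⁰ are ε-far from podal then q_u^t and q_v^t are (1 − 4δ)^t·ε-far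 from podal. -/
open scoped RealInnerProductSpace

section Aux
open scoped Classical
open Matrix

lemma lazyWalk_isHermitian {n : ℕ} (G : SimpleGraph (Fin n)) (d : ℕ) :
    (lazyWalk G d).IsHermitian := by
  ext i j
  simp only [Matrix.conjTranspose_apply, lazyWalk, Matrix.of_apply, star_trivial]
  by_cases h : j = i
  · subst h; rfl
  · have h' : ¬ i = j := fun hh => h hh.symm
    rw [if_neg h, if_neg h']
    by_cases ha : G.Adj j i
    · rw [if_pos ha, if_pos ha.symm]
    · rw [if_neg ha, if_neg (fun hh => ha hh.symm)]

lemma lazyWalk_row_sum {n : ℕ} (G : SimpleGraph (Fin n)) (d : ℕ) (u : Fin n) :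
    ∑ v, lazyWalk G d u v = 1 := by
  have h0 : lazyWalk G d u u = 1 - ((G.neighborSet u).ncard : ℝ) / (2 * d) := by
    simp [lazyWalk]
  have h1 : ∀ v ∈ Finset.univ.erase u, lazyWalk G d u v
      = if G.Adj u v then 1 / (2 * (d : ℝ)) else 0 := by
    intro v hv
    have huv : ¬ u = v := fun hh => (Finset.mem_erase.mp hv).1 hh.symm
    simp [lazyWalk, huv]
  rw [← Finset.sum_erase_add _ _ (Finset.mem_univ u), Finset.sum_congr rfl h1, h0]
  have h2 : ∑ v ∈ Finset.univ.erase u, (if G.Adj u v then 1 / (2 * (d : ℝ)) else 0)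
      = ((G.neighborSet u).ncard : ℝ) * (1 / (2 * d)) := by
    have h3 : ∑ v ∈ Finset.univ.erase u, (if G.Adj u v then 1 / (2 * (d : ℝ)) else 0)
        = ∑ v, (if G.Adj u v then 1 / (2 * (d : ℝ)) else 0) :=
      Finset.sum_erase Finset.univ (by simp [G.irrefl])
    rw [h3, ← Finset.sum_filter, Finset.sum_const]
    have hn : (G.neighborSet u).ncard = (Finset.univ.filter (fun v => G.Adj u v)).card := by
      rw [Set.ncard_eq_toFinset_card']
      congr 1
      ext w
      rw [Set.mem_toFinset]
      simp [SimpleGraph.neighborSet]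
    rw [hn, nsmul_eq_mul]
  rw [h2, mul_one_div]
  ring

lemma lazyWalk_mulVec_one {n : ℕ} (G : SimpleGraph (Fin n)) (d : ℕ) :
    (lazyWalk G d) *ᵥ (fun _ => (1 : ℝ)) = fun _ => 1 := by
  funext u
  simp [Matrix.mulVec, dotProduct, lazyWalk_row_sum G d u]

lemma lazyWalk_pow_mulVec_one {n : ℕ} (G : SimpleGraph (Fin n)) (d t : ℕ) :
    (lazyWalk G d ^ t) *ᵥ (fun _ => (1 : ℝ)) = fun _ => 1 := by
  induction t with
  | zero => simp [Matrix.one_mulVec]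
  | succ t ih =>
      rw [pow_succ, ← Matrix.mulVec_mulVec, lazyWalk_mulVec_one, ih]

lemma toEuclideanLin_pow_apply {n : ℕ} (M : Matrix (Fin n) (Fin n) ℝ) (t : ℕ)
    (x : EuclideanSpace ℝ (Fin n)) :
    (Matrix.toEuclideanLin M ^ t) x
      = (WithLp.equiv 2 (Fin n → ℝ)).symm ((M ^ t) *ᵥ (WithLp.equiv 2 (Fin n → ℝ) x)) := by
  induction t generalizing x with
  | zero => simp [Matrix.one_mulVec]
  | succ t ih =>
      rw [pow_succ, Module.End.mul_apply, ih, (show ∀ y, WithLp.equiv 2 (Fin n → ℝ) (Matrix.toEuclideanLin M y) = M *ᵥ WithLp.equiv 2 (Fin n → ℝ) y from fun _ => rfl),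
        Matrix.mulVec_mulVec, ← pow_succ]

end Aux

section Key
open Matrix

lemma heavyProj_key {n : ℕ} (M : Matrix (Fin n) (Fin n) ℝ)
    (hM : (Matrix.toEuclideanLin M).IsSymmetric) (c : ℝ) (hc : 0 ≤ c) (t : ℕ)
    (x : EuclideanSpace ℝ (Fin n)) :
    c ^ t * ‖heavyProj M c x‖ ≤ ‖(Matrix.toEuclideanLin M ^ t) x‖ ∧
      ((Matrix.toEuclideanLin M ^ t) x = 0 → heavyProj M c x = 0) := by
  classical
  set T := Matrix.toEuclideanLin M with hTdef
  set b : OrthonormalBasis (Fin n) ℝ (EuclideanSpace ℝ (Fin n)) :=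
    hM.eigenvectorBasis finrank_euclideanSpace_fin with hbdef
  set μ : Fin n → ℝ := hM.eigenvalues finrank_euclideanSpace_fin with hμdef
  have hb : ∀ i, T (b i) = μ i • b i := fun i => hM.apply_eigenvectorBasis _ i
  have hbt : ∀ (s : ℕ) (i : Fin n), (T ^ s) (b i) = μ i ^ s • b i := by
    intro s i
    induction s with
    | zero => simp
    | succ s ih =>
        rw [pow_succ, Module.End.mul_apply, hb i, LinearMap.map_smul, ih, smul_smul, ← pow_succ']
  have hTt : ∀ (s : ℕ) (y : EuclideanSpace ℝ (Fin n)),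
      (T ^ s) y = ∑ i, (μ i ^ s * ⟪b i, y⟫) • b i := by
    intro s y
    conv_lhs => rw [← b.sum_repr' y]
    rw [map_sum]
    refine Finset.sum_congr rfl fun i _ => ?_
    rw [LinearMap.map_smul, hbt s i, smul_smul, mul_comm]
  set S : Finset (Fin n) := Finset.univ.filter (fun i => c < μ i) with hS
  have hmemS : ∀ i, i ∈ S ↔ c < μ i := by intro i; simp [hS]
  have hspace : heavySpace M c = Submodule.span ℝ (b '' {i | c < μ i}) := by
    apply le_antisymm
    · unfold heavySpace
      apply iSup_le
      rintro ⟨ν, hν⟩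
      intro y hy
      rw [Module.End.mem_eigenspace_iff] at hy
      have hcoef : ∀ i, ¬ (c < μ i) → ⟪b i, y⟫ = 0 := by
        intro i hi
        have h1 : ⟪T (b i), y⟫ = ⟪b i, T y⟫ := hM (b i) y
        rw [hb i, hy, real_inner_smul_left, real_inner_smul_right] at h1
        by_contra hne
        have hiν : μ i = ν := mul_right_cancel₀ hne h1
        exact absurd hν (not_lt.mpr (hiν ▸ (not_lt.mp hi)))
      rw [← b.sum_repr' y]
      apply Submodule.sum_mem
      intro i _
      by_cases hi : c < μ i
      · exact Submodule.smul_mem _ _ (Submodule.subset_span ⟨i, hi, rfl⟩)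
      · rw [hcoef i hi, zero_smul]; exact Submodule.zero_mem _
    · rw [Submodule.span_le]
      rintro _ ⟨i, hi, rfl⟩
      have hbi : b i ∈ Module.End.eigenspace T (μ i) :=
        Module.End.mem_eigenspace_iff.mpr (hb i)
      exact (le_iSup (fun ν : {ν : ℝ // c < ν} =>
        Module.End.eigenspace T (ν : ℝ)) ⟨μ i, hi⟩) hbi
  have hproj : heavyProj M c x = ∑ i ∈ S, ⟪b i, x⟫ • b i := by
    unfold heavyProj
    rw [← Submodule.starProjection_apply]
    apply Submodule.eq_starProjection_of_mem_of_inner_eq_zero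
    · rw [hspace]
      apply Submodule.sum_mem
      intro i hi
      exact Submodule.smul_mem _ _ (Submodule.subset_span ⟨i, (hmemS i).mp hi, rfl⟩)
    · intro w hw
      rw [hspace] at hw
      induction hw using Submodule.span_induction with
      | mem w hwmem =>
          obtain ⟨i, hi, rfl⟩ := hwmem
          rw [inner_sub_left, sum_inner]
          have hsum : ∑ j ∈ S, ⟪⟪b j, x⟫ • b j, b i⟫ = ⟪b i, x⟫ := by
            have : ∀ j ∈ S, ⟪⟪b j, x⟫ • b j, b i⟫
                = if j = i then ⟪b i, x⟫ else 0 := by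
              intro j _
              rw [real_inner_smul_left]
              rcases eq_or_ne j i with h | h
              · subst h
                rw [real_inner_self_eq_norm_sq, b.orthonormal.1 j, one_pow, mul_one, if_pos rfl]
              · simp [h, b.orthonormal.2 h]
            rw [Finset.sum_congr rfl this, Finset.sum_ite_eq' S i (fun _ => ⟪b i, x⟫),
              if_pos ((hmemS i).mpr hi)]
          rw [hsum, real_inner_comm, sub_self]
      | zero => simp
      | add w₁ w₂ _ _ h₁ h₂ => rw [inner_add_right, h₁, h₂, add_zero]
      | smul r w _ h => rw [real_inner_smul_right, h, mul_zero]
  have hx_proj_norm : ‖heavyProj M c x‖ ^ 2 = ∑ i ∈ S, ⟪b i, x⟫ ^ 2 := by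
    rw [hproj, ← real_inner_self_eq_norm_sq, b.orthonormal.inner_sum]
    simp [sq]
  have hTt_norm : ‖(T ^ t) x‖ ^ 2 = ∑ i, (μ i ^ t * ⟪b i, x⟫) ^ 2 := by
    rw [hTt t x, ← real_inner_self_eq_norm_sq, b.orthonormal.inner_sum]
    simp [sq]
  constructor
  · have h1 : (c ^ t * ‖heavyProj M c x‖) ^ 2 ≤ ‖(T ^ t) x‖ ^ 2 := by
      rw [mul_pow, hx_proj_norm, hTt_norm, Finset.mul_sum]
      calc ∑ i ∈ S, (c ^ t) ^ 2 * ⟪b i, x⟫ ^ 2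
          ≤ ∑ i ∈ S, (μ i ^ t * ⟪b i, x⟫) ^ 2 := by
            apply Finset.sum_le_sum
            intro i hi
            have hci : c ≤ μ i := le_of_lt ((hmemS i).mp hi)
            rw [mul_pow]
            exact mul_le_mul_of_nonneg_right
              (pow_le_pow_left₀ (pow_nonneg hc t) (pow_le_pow_left₀ hc hci t) 2)
              (sq_nonneg _)
        _ ≤ ∑ i, (μ i ^ t * ⟪b i, x⟫) ^ 2 :=
            Finset.sum_le_sum_of_subset_of_nonneg (Finset.subset_univ S)
              (fun i _ _ => sq_nonneg _)
    have h2 : 0 ≤ c ^ t * ‖heavyProj M c x‖ :=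
      mul_nonneg (pow_nonneg hc t) (norm_nonneg _)
    nlinarith [norm_nonneg ((T ^ t) x)]
  · intro h0
    have hz : ∑ i, (μ i ^ t * ⟪b i, x⟫) ^ 2 = 0 := by
      rw [← hTt_norm, h0, norm_zero]; ring
    have hterm := (Finset.sum_eq_zero_iff_of_nonneg
      (fun i (_ : i ∈ Finset.univ) => sq_nonneg (μ i ^ t * ⟪b i, x⟫))).mp hz
    rw [hproj]
    apply Finset.sum_eq_zero
    intro i hi
    have hμpos : 0 < μ i := lt_of_le_of_lt hc ((hmemS i).mp hi)
    have h3 : μ i ^ t * ⟪b i, x⟫ = 0 :=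
      pow_eq_zero_iff (two_ne_zero).elim (n := 2) |>.mp (hterm i (Finset.mem_univ i))
    have h4 : ⟪b i, x⟫ = 0 := by
      rcases mul_eq_zero.mp h3 with h | h
      · exact absurd h (by positivity)
      · exact h
    rw [h4, zero_smul]

end Key

section Bridge
open Matrix

lemma qvec_eq_pow {n : ℕ} (G : SimpleGraph (Fin n)) (d t : ℕ) (u : Fin n) :
    qvec G d t u = (Matrix.toEuclideanLin (lazyWalk G d) ^ t) (qzero u) := by
  rw [toEuclideanLin_pow_apply]
  ext v
  show pvec G d t u v - 1 / n
      = ((lazyWalk G d ^ t) *ᵥ (fun w => ((if w = u then (1 : ℝ) else 0) - 1 / n))) v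
  have hq : (fun w => ((if w = u then (1 : ℝ) else 0) - 1 / n))
      = (fun w => if w = u then (1 : ℝ) else 0) - (1 / (n : ℝ)) • (fun _ => (1 : ℝ)) := by
    funext w
    simp [Pi.sub_apply, Pi.smul_apply, smul_eq_mul, mul_one]
  rw [hq, Matrix.mulVec_sub, Matrix.mulVec_smul, lazyWalk_pow_mulVec_one]
  simp [pvec, Matrix.mulVec]

end Bridge

set_option maxHeartbeats 2000000 in
theorem stmt18 {n d : ℕ} (hd : 1 ≤ d) (G : SimpleGraph (Fin n)) (hdeg : MaxDegreeLE G d)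
    (δ : ℝ) (hδ0 : 0 < δ) (hδ1 : δ ≤ 1 / 4) :
    ∀ (u v : Fin n) (α β : ℝ) (t : ℕ),
      ((1 - 4 * δ) ^ t *
        ‖α • heavyProj (lazyWalk G d) (1 - 4 * δ) (qzero u) +
          β • heavyProj (lazyWalk G d) (1 - 4 * δ) (qzero v)‖ ≤
        ‖α • qvec G d t u + β • qvec G d t v‖) ∧
      ∀ ε : ℝ, 0 < ε →
        (¬ CloseAntipodal ε (heavyProj (lazyWalk G d) (1 - 4 * δ) (qzero u))
            (heavyProj (lazyWalk G d) (1 - 4 * δ) (qzero v)) →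
          ¬ CloseAntipodal ((1 - 4 * δ) ^ t * ε) (qvec G d t u) (qvec G d t v)) ∧
        (¬ ClosePodal ε (heavyProj (lazyWalk G d) (1 - 4 * δ) (qzero u))
            (heavyProj (lazyWalk G d) (1 - 4 * δ) (qzero v)) →
          ¬ ClosePodal ((1 - 4 * δ) ^ t * ε) (qvec G d t u) (qvec G d t v)) := by
  intro u v α β t
  have hc : (0 : ℝ) ≤ 1 - 4 * δ := by linarith
  set c : ℝ := 1 - 4 * δ with hcdef
  set M := lazyWalk G d with hMdef
  have hM : (Matrix.toEuclideanLin M).IsSymmetric :=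
    Matrix.isHermitian_iff_isSymmetric.mp (lazyWalk_isHermitian G d)
  have hlin : ∀ (γ η : ℝ) (y z : EuclideanSpace ℝ (Fin n)),
      heavyProj M c (γ • y + η • z) = γ • heavyProj M c y + η • heavyProj M c z := by
    intro γ η y z
    simp only [heavyProj, map_add, map_smul, Submodule.coe_add, Submodule.coe_smul]
  have hcomb : ∀ (γ η : ℝ), γ • qvec G d t u + η • qvec G d t v
      = (Matrix.toEuclideanLin M ^ t) (γ • qzero u + η • qzero v) := by
    intro γ η
    rw [map_add, LinearMap.map_smul, LinearMap.map_smul, ← qvec_eq_pow, ← qvec_eq_pow]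
  have hkey : ∀ (γ η : ℝ),
      c ^ t * ‖γ • heavyProj M c (qzero u) + η • heavyProj M c (qzero v)‖
        ≤ ‖γ • qvec G d t u + η • qvec G d t v‖ ∧
      (γ • qvec G d t u + η • qvec G d t v = 0 →
        γ • heavyProj M c (qzero u) + η • heavyProj M c (qzero v) = 0) := by
    intro γ η
    have h := heavyProj_key M hM c hc t (γ • qzero u + η • qzero v)
    rw [hlin γ η (qzero u) (qzero v)] at h
    rw [hcomb γ η]
    exact h
  set a := heavyProj M c (qzero u) with hadef
  set bb := heavyProj M c (qzero v) with hbbdef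
  refine ⟨(hkey α β).1, ?_⟩
  intro ε hε
  have hsingle_u : ‖qvec G d t u‖ ≤ c ^ t * ε → ‖a‖ ≤ ε := by
    intro h
    by_cases hct : c ^ t = 0
    · have h0 : qvec G d t u = 0 := by
        rw [hct, zero_mul] at h
        exact norm_le_zero_iff.mp h
      have h1 := (hkey 1 0).2 (by rw [h0]; simp)
      simp only [one_smul, zero_smul, add_zero] at h1
      rw [h1, norm_zero]; exact le_of_lt hε
    · have hpos : 0 < c ^ t := lt_of_le_of_ne (pow_nonneg hc t) (Ne.symm hct)
      have h1 := (hkey 1 0).1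
      simp only [one_smul, zero_smul, add_zero] at h1
      exact le_of_mul_le_mul_left (le_trans h1 h) hpos
  have hsingle_v : ‖qvec G d t v‖ ≤ c ^ t * ε → ‖bb‖ ≤ ε := by
    intro h
    by_cases hct : c ^ t = 0
    · have h0 : qvec G d t v = 0 := by
        rw [hct, zero_mul] at h
        exact norm_le_zero_iff.mp h
      have h1 := (hkey 0 1).2 (by rw [h0]; simp)
      simp only [one_smul, zero_smul, zero_add] at h1
      rw [h1, norm_zero]; exact le_of_lt hε
    · have hpos : 0 < c ^ t := lt_of_le_of_ne (pow_nonneg hc t) (Ne.symm hct)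
      have h1 := (hkey 0 1).1
      simp only [one_smul, zero_smul, zero_add] at h1
      exact le_of_mul_le_mul_left (le_trans h1 h) hpos
  constructor
  · -- antipodal
    intro hfar hclose
    apply hfar
    obtain ⟨ea, eb, w, s, s', hs, hs', hea, heb, h1, h2⟩ := hclose
    have e1 : qvec G d t u = s • w - ea := eq_sub_of_add_eq h1
    have e2 : qvec G d t v = -(s' • w) - eb := eq_sub_of_add_eq h2
    have hcomb0 : s' • qvec G d t u + s • qvec G d t v = -(s' • ea) - s • eb := by
      rw [e1, e2]; module
    have hnorm0 : ‖s' • qvec G d t u + s • qvec G d t v‖ ≤ (s + s') * (c ^ t * ε) := by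
      rw [hcomb0]
      calc ‖-(s' • ea) - s • eb‖ ≤ ‖-(s' • ea)‖ + ‖s • eb‖ := norm_sub_le _ _
        _ = s' * ‖ea‖ + s * ‖eb‖ := by
            rw [norm_neg, norm_smul, norm_smul, Real.norm_eq_abs, Real.norm_eq_abs,
              abs_of_nonneg hs', abs_of_nonneg hs]
        _ ≤ s' * (c ^ t * ε) + s * (c ^ t * ε) := by gcongr
        _ = (s + s') * (c ^ t * ε) := by ring
    have hmain : ‖s' • a + s • bb‖ ≤ (s + s') * ε := by
      by_cases hct : c ^ t = 0
      · have hea0 : ea = 0 := norm_le_zero_iff.mp (by rw [hct, zero_mul] at hea; exact hea)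
        have heb0 : eb = 0 := norm_le_zero_iff.mp (by rw [hct, zero_mul] at heb; exact heb)
        have hz0 : s' • qvec G d t u + s • qvec G d t v = 0 := by
          rw [hcomb0, hea0, heb0]; simp
        rw [(hkey s' s).2 hz0, norm_zero]
        positivity
      · have hpos : 0 < c ^ t := lt_of_le_of_ne (pow_nonneg hc t) (Ne.symm hct)
        have h3 := le_trans (hkey s' s).1 hnorm0
        rw [show (s + s') * (c ^ t * ε) = c ^ t * ((s + s') * ε) by ring] at h3
        exact le_of_mul_le_mul_left h3 hpos
    by_cases hss : s + s' = 0
    · have hs0 : s = 0 := by linarith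
      have hs'0 : s' = 0 := by linarith
      have hqa : ‖a‖ ≤ ε := hsingle_u (by
        rw [e1, hs0, zero_smul, zero_sub, norm_neg]; exact hea)
      have hqb : ‖bb‖ ≤ ε := hsingle_v (by
        rw [e2, hs'0, zero_smul, neg_zero, zero_sub, norm_neg]; exact heb)
      exact ⟨-a, -bb, 0, 0, 0, le_refl 0, le_refl 0,
        by rwa [norm_neg], by rwa [norm_neg], by simp, by simp⟩
    · have hpos : 0 < s + s' := lt_of_le_of_ne (by linarith) (Ne.symm hss)
      set lam := s' / (s + s') with hlam
      set mu := s / (s + s') with hmu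
      have hlam0 : 0 ≤ lam := div_nonneg hs' hpos.le
      have hmu0 : 0 ≤ mu := div_nonneg hs hpos.le
      have hlm : lam + mu = 1 := by
        rw [hlam, hmu, ← add_div, add_comm s' s, div_self hss]
      set z := lam • a + mu • bb with hz
      have hzn : ‖z‖ ≤ ε := by
        have hzeq : z = (s + s')⁻¹ • (s' • a + s • bb) := by
          rw [hz, hlam, hmu]; module
        rw [hzeq, norm_smul, Real.norm_eq_abs, abs_of_nonneg (inv_nonneg.mpr hpos.le)]
        calc (s + s')⁻¹ * ‖s' • a + s • bb‖ ≤ (s + s')⁻¹ * ((s + s') * ε) := by gcongr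
          _ = ε := by field_simp
      refine ⟨-z, -z, a - bb, mu, lam, hmu0, hlam0,
        by rwa [norm_neg], by rwa [norm_neg], ?_, ?_⟩
      · have h4 : a + -z = (1 - lam) • a - mu • bb := by rw [hz]; module
        rw [h4, show (1 : ℝ) - lam = mu by linarith, smul_sub]
      · have h5 : bb + -z = (1 - mu) • bb - lam • a := by rw [hz]; module
        rw [h5, show (1 : ℝ) - mu = lam by linarith]
        module
  · -- podal
    intro hfar hclose
    apply hfar
    obtain ⟨ea, eb, w, s, s', hs, hs', hea, heb, h1, h2⟩ := hclose
    have e1 : qvec G d t u = s • w - ea := eq_sub_of_add_eq h1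
    have e2 : qvec G d t v = s' • w - eb := eq_sub_of_add_eq h2
    have hcomb0 : s' • qvec G d t u + (-s) • qvec G d t v = -(s' • ea) + s • eb := by
      rw [e1, e2]; module
    have hnorm0 : ‖s' • qvec G d t u + (-s) • qvec G d t v‖ ≤ (s + s') * (c ^ t * ε) := by
      rw [hcomb0]
      calc ‖-(s' • ea) + s • eb‖ ≤ ‖-(s' • ea)‖ + ‖s • eb‖ := norm_add_le _ _
        _ = s' * ‖ea‖ + s * ‖eb‖ := by
            rw [norm_neg, norm_smul, norm_smul, Real.norm_eq_abs, Real.norm_eq_abs,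
              abs_of_nonneg hs', abs_of_nonneg hs]
        _ ≤ s' * (c ^ t * ε) + s * (c ^ t * ε) := by gcongr
        _ = (s + s') * (c ^ t * ε) := by ring
    have hmain : ‖s' • a + (-s) • bb‖ ≤ (s + s') * ε := by
      by_cases hct : c ^ t = 0
      · have hea0 : ea = 0 := norm_le_zero_iff.mp (by rw [hct, zero_mul] at hea; exact hea)
        have heb0 : eb = 0 := norm_le_zero_iff.mp (by rw [hct, zero_mul] at heb; exact heb)
        have hz0 : s' • qvec G d t u + (-s) • qvec G d t v = 0 := by
          rw [hcomb0, hea0, heb0]; simp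
        rw [(hkey s' (-s)).2 hz0, norm_zero]
        positivity
      · have hpos : 0 < c ^ t := lt_of_le_of_ne (pow_nonneg hc t) (Ne.symm hct)
        have h3 := le_trans (hkey s' (-s)).1 hnorm0
        rw [show (s + s') * (c ^ t * ε) = c ^ t * ((s + s') * ε) by ring] at h3
        exact le_of_mul_le_mul_left h3 hpos
    by_cases hss : s + s' = 0
    · have hs0 : s = 0 := by linarith
      have hs'0 : s' = 0 := by linarith
      have hqa : ‖a‖ ≤ ε := hsingle_u (by
        rw [e1, hs0, zero_smul, zero_sub, norm_neg]; exact hea)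
      have hqb : ‖bb‖ ≤ ε := hsingle_v (by
        rw [e2, hs'0, zero_smul, zero_sub, norm_neg]; exact heb)
      exact ⟨-a, -bb, 0, 0, 0, le_refl 0, le_refl 0,
        by rwa [norm_neg], by rwa [norm_neg], by simp, by simp⟩
    · have hpos : 0 < s + s' := lt_of_le_of_ne (by linarith) (Ne.symm hss)
      set lam := s' / (s + s') with hlam
      set mu := s / (s + s') with hmu
      have hlam0 : 0 ≤ lam := div_nonneg hs' hpos.le
      have hmu0 : 0 ≤ mu := div_nonneg hs hpos.le
      have hlm : lam + mu = 1 := by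
        rw [hlam, hmu, ← add_div, add_comm s' s, div_self hss]
      set z := lam • a - mu • bb with hz
      have hzn : ‖z‖ ≤ ε := by
        have hzeq : z = (s + s')⁻¹ • (s' • a + (-s) • bb) := by
          rw [hz, hlam, hmu]; module
        rw [hzeq, norm_smul, Real.norm_eq_abs, abs_of_nonneg (inv_nonneg.mpr hpos.le)]
        calc (s + s')⁻¹ * ‖s' • a + (-s) • bb‖ ≤ (s + s')⁻¹ * ((s + s') * ε) := by gcongr
          _ = ε := by field_simp
      refine ⟨-z, z, a + bb, mu, lam, hmu0, hlam0,
        by rwa [norm_neg], hzn, ?_, ?_⟩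
      · have h4 : a + -z = (1 - lam) • a + mu • bb := by rw [hz]; module
        rw [h4, show (1 : ℝ) - lam = mu by linarith, smul_add]
      · have h5 : bb + z = lam • a + (1 - mu) • bb := by rw [hz]; module
        rw [h5, show (1 : ℝ) - mu = lam by linarith, smul_add]
end
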